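/- Let Y be a metric space and let 𝓑 be a collection of closed subsets of Y satisfying property (T1). Let 𝓛₁ and 𝔤₁ be two topological arcs with common endpoints u, v, and let 𝓛₂ and 𝔤₂ be two, possibly identical, topological arcs with common endpoints v, w. Assume: (1) 𝓛₁ ∩ 𝓛₂ = {v}; (2) 𝔤₁ ∩ 𝔤₂ contains a point a ≠ v; (3) every non-trivial simple 𝒯-bigon formed either by 𝔤₁ and 𝔤₂, or by 𝔤₁ and 𝓛₁, or by 𝔤₂ and 𝓛₂, is contained in some member of 𝓑. Then the 𝒯-bigon formed by 𝔤₁ and 𝔤₂ with endpoints a and v is contained in some member of 𝓑. -/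

import Mathlib

open Set Metric

/-- A topological arc in `Y`: a topological embedding of `[0,1]` into `Y`
(continuous and injective on `[0,1]`, which suffices since `[0,1]` is compact
and `Y` is Hausdorff). -/
structure TopArc (Y : Type*) [MetricSpace Y] where
  toFun : ℝ → Y
  cont : ContinuousOn toFun (Set.Icc 0 1)
  inj : Set.InjOn toFun (Set.Icc 0 1)

namespace TopArc
variable {Y : Type*} [MetricSpace Y]
/-- The arc, as a subset of `Y`. -/
def image (γ : TopArc Y) : Set Y := γ.toFun '' Set.Icc 0 1
end TopArc

/-- A `𝒯`-bigon formed by two topological arcs `γ₁`, `γ₂`: a sub-arc of `γ₁` and a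
sub-arc of `γ₂` with common endpoints. -/
structure TBigon {Y : Type*} [MetricSpace Y] (γ₁ γ₂ : TopArc Y) where
  a₁ : ℝ
  b₁ : ℝ
  a₂ : ℝ
  b₂ : ℝ
  ha₁ : a₁ ∈ Set.Icc (0:ℝ) 1
  hb₁ : b₁ ∈ Set.Icc (0:ℝ) 1
  ha₂ : a₂ ∈ Set.Icc (0:ℝ) 1
  hb₂ : b₂ ∈ Set.Icc (0:ℝ) 1
  hle₁ : a₁ ≤ b₁
  hle₂ : a₂ ≤ b₂
  ends_eq : ({γ₁.toFun a₁, γ₁.toFun b₁} : Set Y) = {γ₂.toFun a₂, γ₂.toFun b₂}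

namespace TBigon
variable {Y : Type*} [MetricSpace Y] {γ₁ γ₂ : TopArc Y}

/-- The sub-arc of `γ₁`. -/
def side₁ (T : TBigon γ₁ γ₂) : Set Y := γ₁.toFun '' Set.Icc T.a₁ T.b₁
/-- The sub-arc of `γ₂`. -/
def side₂ (T : TBigon γ₁ γ₂) : Set Y := γ₂.toFun '' Set.Icc T.a₂ T.b₂
/-- The bigon, as a subset of `Y`. -/
def carrier (T : TBigon γ₁ γ₂) : Set Y := T.side₁ ∪ T.side₂
/-- The endpoints of the bigon. -/
def endpoints (T : TBigon γ₁ γ₂) : Set Y := {γ₁.toFun T.a₁, γ₁.toFun T.b₁}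
/-- The interior of the bigon. -/
def interiorSet (T : TBigon γ₁ γ₂) : Set Y := T.carrier \ T.endpoints
/-- The bigon is simple: its two sides meet only in their endpoints. -/
def Simple (T : TBigon γ₁ γ₂) : Prop := T.side₁ ∩ T.side₂ = T.endpoints
/-- The bigon is non-trivial: it is not reduced to a point. -/
def Nontrivial (T : TBigon γ₁ γ₂) : Prop := ¬ ∃ p : Y, T.carrier = {p}

end TBigon

/-- Property (T₁) for a collection of subsets: two distinct members have at most one
common point. -/
def PropT1 {Y : Type*} (𝓑 : Set (Set Y)) : Prop :=
  ∀ B ∈ 𝓑, ∀ B' ∈ 𝓑, B ≠ B' → (B ∩ B').Subsingleton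

open Set Filter Topology

namespace Braid

structure Ctx (Y : Type*) [MetricSpace Y] : Type _ where
  B𝒻 : Set (Set Y)
  hclosed : ∀ B ∈ B𝒻, IsClosed B
  hT1 : PropT1 B𝒻
  α : ℝ → Y
  β : ℝ → Y
  αc : ContinuousOn α (Icc 0 1)
  αi : InjOn α (Icc 0 1)
  βc : ContinuousOn β (Icc 0 1)
  βi : InjOn β (Icc 0 1)
  h00 : α 0 = β 0
  h11 : α 1 = β 1
  hne01 : α 0 ≠ α 1
  hgap : ∀ c d τ₁ τ₂ : ℝ, c ∈ Icc (0:ℝ) 1 → d ∈ Icc (0:ℝ) 1 → τ₁ ∈ Icc (0:ℝ) 1 → τ₂ ∈ Icc (0:ℝ) 1 →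
    c ≤ d → τ₁ ≤ τ₂ → (c < d ∨ τ₁ < τ₂) →
    ({α c, α d} : Set Y) = {β τ₁, β τ₂} →
    (α '' Icc c d ∩ β '' Icc τ₁ τ₂ ⊆ {α c, α d}) →
    ∃ B ∈ B𝒻, α '' Icc c d ∪ β '' Icc τ₁ τ₂ ⊆ B
  habs : ∀ r τ : ℝ, r ∈ Ico (0:ℝ) 1 → τ ∈ Ico (0:ℝ) 1 → α r = β τ →
    (∃ p q : ℝ, 0 ≤ p ∧ p ≤ r ∧ (0 < r → p < r) ∧ r < q ∧ q ≤ 1 ∧ ∃ B ∈ B𝒻, α '' Icc p q ⊆ B) ∨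
    (∃ p q : ℝ, 0 ≤ p ∧ p ≤ τ ∧ (0 < τ → p < τ) ∧ τ < q ∧ q ≤ 1 ∧ ∃ B ∈ B𝒻, β '' Icc p q ⊆ B)

namespace Ctx

open scoped Classical

variable {Y : Type*} [MetricSpace Y] (C : Ctx Y)

/-- swap the two arcs -/
def symm : Ctx Y where
  B𝒻 := C.B𝒻
  hclosed := C.hclosed
  hT1 := C.hT1
  α := C.β
  β := C.α
  αc := C.βc
  αi := C.βi
  βc := C.αc
  βi := C.αi
  h00 := C.h00.symm
  h11 := C.h11.symm
  hne01 := by rw [← C.h00, ← C.h11]; exact C.hne01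
  hgap := by
    intro c d τ₁ τ₂ hc hd h1 h2 hcd hτ hlt hends hint
    obtain ⟨B, hB, hsub⟩ := C.hgap τ₁ τ₂ c d h1 h2 hc hd hτ hcd hlt.symm hends.symm
      (by rw [Set.inter_comm, ← hends]; exact hint)
    exact ⟨B, hB, by rw [Set.union_comm]; exact hsub⟩
  habs := by
    intro r τ hr hτ h
    exact (C.habs τ r hτ hr h.symm).symm

lemma symm_symm : C.symm.symm = C := rfl

/-- the set of parameters of common points, seen from `α`'s side -/
def SS : Set ℝ := {s ∈ Icc (0:ℝ) 1 | C.α s ∈ C.β '' Icc 0 1}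

/-- transition map: the `β`-parameter of a common point -/
noncomputable def ph (s : ℝ) : ℝ :=
  if h : ∃ x ∈ Icc (0:ℝ) 1, C.β x = C.α s then h.choose else 0

lemma mem_SS_iff {s : ℝ} : s ∈ C.SS ↔ s ∈ Icc (0:ℝ) 1 ∧ C.α s ∈ C.β '' Icc 0 1 := Iff.rfl

lemma SS_subset : C.SS ⊆ Icc (0:ℝ) 1 := fun _ h => h.1

lemma ph_spec {s : ℝ} (hs : s ∈ C.SS) : C.ph s ∈ Icc (0:ℝ) 1 ∧ C.β (C.ph s) = C.α s := by
  obtain ⟨-, hmem⟩ := hs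
  obtain ⟨x, hx, hxe⟩ := hmem
  have h : ∃ x ∈ Icc (0:ℝ) 1, C.β x = C.α s := ⟨x, hx, hxe⟩
  rw [ph, dif_pos h]
  exact ⟨h.choose_spec.1, h.choose_spec.2⟩

lemma ph_mem {s : ℝ} (hs : s ∈ C.SS) : C.ph s ∈ Icc (0:ℝ) 1 := (C.ph_spec hs).1

lemma β_ph {s : ℝ} (hs : s ∈ C.SS) : C.β (C.ph s) = C.α s := (C.ph_spec hs).2

lemma ph_eq_of {s x : ℝ} (hs : s ∈ C.SS) (hx : x ∈ Icc (0:ℝ) 1) (h : C.β x = C.α s) :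
    C.ph s = x :=
  C.βi (C.ph_mem hs) hx (by rw [C.β_ph hs, h])

lemma zero_mem_SS : (0:ℝ) ∈ C.SS :=
  ⟨⟨le_refl _, zero_le_one⟩, ⟨0, ⟨le_refl _, zero_le_one⟩, C.h00.symm⟩⟩

lemma one_mem_SS : (1:ℝ) ∈ C.SS :=
  ⟨⟨zero_le_one, le_refl _⟩, ⟨1, ⟨zero_le_one, le_refl _⟩, C.h11.symm⟩⟩

lemma ph_zero : C.ph 0 = 0 :=
  C.ph_eq_of C.zero_mem_SS ⟨le_refl _, zero_le_one⟩ C.h00.symm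

lemma ph_one : C.ph 1 = 1 :=
  C.ph_eq_of C.one_mem_SS ⟨zero_le_one, le_refl _⟩ C.h11.symm

lemma ph_mem_symm_SS {s : ℝ} (hs : s ∈ C.SS) : C.ph s ∈ C.symm.SS :=
  ⟨C.ph_mem hs, ⟨s, C.SS_subset hs, (C.β_ph hs).symm⟩⟩

lemma ph_ph {s : ℝ} (hs : s ∈ C.SS) : C.symm.ph (C.ph s) = s := by
  have h1 : C.symm.β (C.symm.ph (C.ph s)) = C.symm.α (C.ph s) := C.symm.β_ph (C.ph_mem_symm_SS hs)
  -- C.symm.β = C.α, C.symm.α = C.β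
  have h2 : C.α (C.symm.ph (C.ph s)) = C.α s := by
    have := C.β_ph hs
    exact h1.trans this
  exact C.αi (C.symm.ph_mem (C.ph_mem_symm_SS hs)) (C.SS_subset hs) h2

lemma ph_injOn {s s' : ℝ} (hs : s ∈ C.SS) (hs' : s' ∈ C.SS) (h : C.ph s = C.ph s') : s = s' := by
  have : C.α s = C.α s' := by rw [← C.β_ph hs, ← C.β_ph hs', h]
  exact C.αi (C.SS_subset hs) (C.SS_subset hs') this

lemma SS_closed : IsClosed C.SS := by
  have himg : IsClosed (C.β '' Icc 0 1) :=
    ((isCompact_Icc).image_of_continuousOn C.βc).isClosed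
  have := C.αc.preimage_isClosed_of_isClosed isClosed_Icc himg
  exact this

end Ctx
end Braid

namespace Braid
namespace Ctx

variable {Y : Type*} [MetricSpace Y] (C : Ctx Y)

lemma eval_tendsto {f : ℝ → Y} {s : Set ℝ} (hf : ContinuousOn f s) {u : ℕ → ℝ}
    (hu : ∀ n, u n ∈ s) {x : ℝ} (hx : x ∈ s) (h : Tendsto u atTop (𝓝 x)) :
    Tendsto (fun n => f (u n)) atTop (𝓝 (f x)) :=
  (hf.continuousWithinAt hx).tendsto.comp
    (tendsto_nhdsWithin_of_tendsto_nhds_of_eventually_within u h (Eventually.of_forall hu))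

lemma mem_SS_of_tendsto {u : ℕ → ℝ} (hu : ∀ n, u n ∈ C.SS) {x : ℝ}
    (h : Tendsto u atTop (𝓝 x)) : x ∈ C.SS :=
  C.SS_closed.mem_of_tendsto h (Eventually.of_forall hu)

lemma ph_tendsto {u : ℕ → ℝ} (hu : ∀ n, u n ∈ C.SS) {s : ℝ} (hs : s ∈ C.SS)
    (hlim : Tendsto u atTop (𝓝 s)) :
    Tendsto (fun n => C.ph (u n)) atTop (𝓝 (C.ph s)) := by
  apply tendsto_of_subseq_tendsto
  intro ns hns
  have hmem : ∀ n, C.ph (u (ns n)) ∈ Icc (0:ℝ) 1 := fun n => C.ph_mem (hu _)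
  obtain ⟨x, hxI, ms, hms, hconv⟩ := isCompact_Icc.tendsto_subseq hmem
  refine ⟨ms, ?_⟩
  have husm : Tendsto (fun n => u (ns (ms n))) atTop (𝓝 s) :=
    hlim.comp (hns.comp hms.tendsto_atTop)
  have h1 : Tendsto (fun n => C.β (C.ph (u (ns (ms n))))) atTop (𝓝 (C.β x)) :=
    eval_tendsto C.βc (fun n => C.ph_mem (hu _)) hxI hconv
  have h2 : (fun n => C.β (C.ph (u (ns (ms n))))) = fun n => C.α (u (ns (ms n))) :=
    funext fun n => C.β_ph (hu _)
  have h3 : Tendsto (fun n => C.α (u (ns (ms n)))) atTop (𝓝 (C.α s)) :=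
    eval_tendsto C.αc (fun n => C.SS_subset (hu _)) (C.SS_subset hs) husm
  rw [h2] at h1
  have hβx : C.β x = C.α s := tendsto_nhds_unique h1 h3
  have hx' : x = C.ph s := (C.ph_eq_of hs hxI hβx).symm
  rw [← hx']
  exact hconv

/-- coverage of initial segments of both arcs -/
def Cov (B : Set Y) (s τ : ℝ) : Prop := C.α '' Icc 0 s ∪ C.β '' Icc 0 τ ⊆ B

/-- half-stability -/
def HS (s τ : ℝ) : Prop := ∀ s' ∈ C.SS, s' ≤ s → C.ph s' ≤ τ

lemma Cov.symm' {B : Set Y} {s τ : ℝ} (h : C.Cov B s τ) : C.symm.Cov B τ s := by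
  rw [Cov, Set.union_comm]; exact h

lemma merge {B B' : Set Y} (hB : B ∈ C.B𝒻) (hB' : B' ∈ C.B𝒻) {x y : Y}
    (hx : x ∈ B) (hx' : x ∈ B') (hy : y ∈ B) (hy' : y ∈ B') (hxy : x ≠ y) : B = B' := by
  by_contra h
  exact hxy (C.hT1 B hB B' hB' h ⟨hx, hx'⟩ ⟨hy, hy'⟩)

lemma covα {B : Set Y} {s τ : ℝ} (h : C.Cov B s τ) {r : ℝ} (h0 : 0 ≤ r) (hr : r ≤ s) :
    C.α r ∈ B := h (Or.inl ⟨r, ⟨h0, hr⟩, rfl⟩)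

lemma covβ {B : Set Y} {s τ : ℝ} (h : C.Cov B s τ) {r : ℝ} (h0 : 0 ≤ r) (hr : r ≤ τ) :
    C.β r ∈ B := h (Or.inr ⟨r, ⟨h0, hr⟩, rfl⟩)

/-- the next `α`-frontier: absorb everything matched into the already covered part of `β` -/
noncomputable def nxt (s τ : ℝ) : ℝ := sSup {x | x ∈ C.SS ∧ (x ≤ s ∨ C.ph x ≤ τ)}

lemma psi_set_closed (s τ : ℝ) : IsClosed {x | x ∈ C.SS ∧ (x ≤ s ∨ C.ph x ≤ τ)} := by
  apply IsSeqClosed.isClosed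
  intro u x hu hux
  have hxS : x ∈ C.SS := C.mem_SS_of_tendsto (fun n => (hu n).1) hux
  refine ⟨hxS, ?_⟩
  by_cases hxs : x ≤ s
  · exact Or.inl hxs
  · push_neg at hxs
    have hev : ∀ᶠ n in atTop, s < u n := hux.eventually (eventually_gt_nhds hxs)
    have hev2 : ∀ᶠ n in atTop, C.ph (u n) ≤ τ := by
      filter_upwards [hev] with n hn
      rcases (hu n).2 with h | h
      · exact absurd h (not_le.mpr hn)
      · exact h
    have := C.ph_tendsto (fun n => (hu n).1) hxS hux
    exact Or.inr (le_of_tendsto this hev2)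

lemma step {B : Set Y} {s τ : ℝ} (hB : B ∈ C.B𝒻) (hs : s ∈ C.SS) (hτ : τ ∈ C.symm.SS)
    (hcov : C.Cov B s τ) (hhs : C.HS s τ) :
    C.nxt s τ ∈ C.SS ∧ s ≤ C.nxt s τ ∧ C.Cov B (C.nxt s τ) τ ∧ C.symm.HS τ (C.nxt s τ) := by
  classical
  set Ψ : Set ℝ := {x | x ∈ C.SS ∧ (x ≤ s ∨ C.ph x ≤ τ)} with hΨdef
  have hΨclosed : IsClosed Ψ := C.psi_set_closed s τ
  have hΨsub : Ψ ⊆ Icc (0:ℝ) 1 := fun x hx => C.SS_subset hx.1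
  have hΨbdd : BddAbove Ψ := BddAbove.mono hΨsub bddAbove_Icc
  have hsΨ : s ∈ Ψ := ⟨hs, Or.inl le_rfl⟩
  have hΨne : Ψ.Nonempty := ⟨s, hsΨ⟩
  have hnxtΨ : C.nxt s τ ∈ Ψ := hΨclosed.csSup_mem hΨne hΨbdd
  have hnxtS : C.nxt s τ ∈ C.SS := hnxtΨ.1
  have hsle : s ≤ C.nxt s τ := le_csSup hΨbdd hsΨ
  have hτ01 : τ ∈ Icc (0:ℝ) 1 := C.symm.SS_subset hτ
  -- φ-values of Ψ members are ≤ τ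
  have hphΨ : ∀ x ∈ Ψ, C.ph x ≤ τ := by
    rintro x ⟨hxS, hx | hx⟩
    · exact hhs x hxS hx
    · exact hx
  refine ⟨hnxtS, hsle, ?_, ?_⟩
  · -- coverage
    rintro pt (⟨r, ⟨hr0, hr⟩, rfl⟩ | hpt)
    swap
    · exact hcov (Or.inr hpt)
    by_cases hrs : r ≤ s
    · exact C.covα hcov hr0 hrs
    push_neg at hrs
    by_cases hrΨ : r ∈ Ψ
    · rcases hrΨ.2 with h | h
      · exact absurd h (not_le.mpr hrs)
      · rw [← C.β_ph hrΨ.1]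
        exact C.covβ hcov (C.ph_mem hrΨ.1).1 h
    -- r is in a gap of Ψ
    · have hc_set : IsClosed (Ψ ∩ Iic r) := hΨclosed.inter isClosed_Iic
      have hc_ne : (Ψ ∩ Iic r).Nonempty := ⟨s, hsΨ, le_of_lt hrs⟩
      have hc_bdd : BddAbove (Ψ ∩ Iic r) := hΨbdd.mono Set.inter_subset_left
      set c := sSup (Ψ ∩ Iic r) with hcdef
      have hcmem : c ∈ Ψ ∩ Iic r := hc_set.csSup_mem hc_ne hc_bdd
      have hcr : c < r := lt_of_le_of_ne hcmem.2 (fun h => hrΨ (h ▸ hcmem.1))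
      have hd_set : IsClosed (Ψ ∩ Ici r) := hΨclosed.inter isClosed_Ici
      have hd_ne : (Ψ ∩ Ici r).Nonempty := ⟨C.nxt s τ, hnxtΨ, hr⟩
      have hd_bdd : BddBelow (Ψ ∩ Ici r) := BddBelow.mono Set.inter_subset_left
        (BddBelow.mono hΨsub bddBelow_Icc)
      set d := sInf (Ψ ∩ Ici r) with hddef
      have hdmem : d ∈ Ψ ∩ Ici r := hd_set.csInf_mem hd_ne hd_bdd
      have hrd : r < d := lt_of_le_of_ne hdmem.2 (fun h => hrΨ (by rw [h]; exact hdmem.1))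
      have hcS : c ∈ C.SS := hcmem.1.1
      have hdS : d ∈ C.SS := hdmem.1.1
      have hgapempty : ∀ x ∈ Ψ, x ∉ Ioo c d := by
        intro x hx hxoo
        rcases le_total x r with h | h
        · exact absurd (le_csSup hc_bdd ⟨hx, h⟩) (not_le.mpr hxoo.1)
        · exact absurd (csInf_le hd_bdd ⟨hx, h⟩) (not_le.mpr hxoo.2)
      have hφc : C.ph c ≤ τ := hphΨ c hcmem.1
      have hφd : C.ph d ≤ τ := hphΨ d hdmem.1
      have hφcI : C.ph c ∈ Icc (0:ℝ) 1 := C.ph_mem hcS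
      have hφdI : C.ph d ∈ Icc (0:ℝ) 1 := C.ph_mem hdS
      have hcd : c < d := hcr.trans hrd
      have hφne : C.ph c ≠ C.ph d := fun h => (ne_of_lt hcd) (C.ph_injOn hcS hdS h)
      set τ₁ := min (C.ph c) (C.ph d) with hτ₁def
      set τ₂ := max (C.ph c) (C.ph d) with hτ₂def
      have hτ₁I : τ₁ ∈ Icc (0:ℝ) 1 := ⟨le_min hφcI.1 hφdI.1, le_trans (min_le_left _ _) hφcI.2⟩
      have hτ₂I : τ₂ ∈ Icc (0:ℝ) 1 := ⟨le_trans hφcI.1 (le_max_left _ _), max_le hφcI.2 hφdI.2⟩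
      have hτ₂τ : τ₂ ≤ τ := max_le hφc hφd
      have hends : ({C.α c, C.α d} : Set Y) = {C.β τ₁, C.β τ₂} := by
        rw [← C.β_ph hcS, ← C.β_ph hdS]
        rcases le_total (C.ph c) (C.ph d) with h | h
        · rw [hτ₁def, hτ₂def, min_eq_left h, max_eq_right h]
        · rw [hτ₁def, hτ₂def, min_eq_right h, max_eq_left h, Set.pair_comm]
      have hinter : C.α '' Icc c d ∩ C.β '' Icc τ₁ τ₂ ⊆ {C.α c, C.α d} := by
        rintro pt ⟨⟨x, hxm, rfl⟩, ⟨y, hym, hye⟩⟩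
        have hxI : x ∈ Icc (0:ℝ) 1 := ⟨le_trans (C.SS_subset hcS).1 hxm.1,
          le_trans hxm.2 (C.SS_subset hdS).2⟩
        have hyI : y ∈ Icc (0:ℝ) 1 := ⟨le_trans hτ₁I.1 hym.1, le_trans hym.2 hτ₂I.2⟩
        have hxS : x ∈ C.SS := ⟨hxI, ⟨y, hyI, hye⟩⟩
        have hphx : C.ph x = y := C.ph_eq_of hxS hyI hye
        have hxΨ : x ∈ Ψ := ⟨hxS, Or.inr (by rw [hphx]; exact le_trans hym.2 hτ₂τ)⟩
        have : x = c ∨ x = d := by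
          rcases eq_or_lt_of_le hxm.1 with h | h
          · exact Or.inl h.symm
          rcases eq_or_lt_of_le hxm.2 with h2 | h2
          · exact Or.inr h2
          · exact absurd ⟨h, h2⟩ (hgapempty x hxΨ)
        rcases this with h | h
        · exact Or.inl (by rw [h])
        · exact Or.inr (by rw [h]; rfl)
      obtain ⟨BD, hBD, hsubD⟩ := C.hgap c d τ₁ τ₂ (C.SS_subset hcS) (C.SS_subset hdS)
        hτ₁I hτ₂I hcd.le (min_le_max) (Or.inl hcd) hends hinter
      -- merge BD with B
      have hBeq : B = BD := by
        refine C.merge hB hBD (x := C.β τ₁) (y := C.β τ₂) ?_ ?_ ?_ ?_ ?_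
        · exact C.covβ hcov hτ₁I.1 (le_trans min_le_max hτ₂τ)
        · exact hsubD (Or.inr ⟨τ₁, ⟨le_rfl, min_le_max⟩, rfl⟩)
        · exact C.covβ hcov hτ₂I.1 hτ₂τ
        · exact hsubD (Or.inr ⟨τ₂, ⟨min_le_max, le_rfl⟩, rfl⟩)
        · intro h
          rcases le_total (C.ph c) (C.ph d) with hcase | hcase
          · rw [hτ₁def, hτ₂def, min_eq_left hcase, max_eq_right hcase] at h
            exact hφne (C.βi hφcI hφdI h)
          · rw [hτ₁def, hτ₂def, min_eq_right hcase, max_eq_left hcase] at h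
            exact hφne (C.βi hφdI hφcI h).symm
      rw [hBeq]
      exact hsubD (Or.inl ⟨r, ⟨hcr.le, hrd.le⟩, rfl⟩)
  · -- HS for the other side
    intro τ' hτ' hle
    have h1 : C.symm.ph τ' ∈ C.SS := C.symm.ph_mem_symm_SS hτ'
    have h2 : C.ph (C.symm.ph τ') = τ' := C.symm.ph_ph hτ'
    exact le_csSup hΨbdd ⟨h1, Or.inr (by rw [h2]; exact hle)⟩
end Ctx
end Braid

namespace Braid
namespace Ctx

variable {Y : Type*} [MetricSpace Y] (C : Ctx Y)

/-- the closure/absorption iteration: from a covered half-stable pair, reach a covered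
stable pair -/
lemma cal {B : Set Y} {s τ : ℝ} (hB : B ∈ C.B𝒻) (hs : s ∈ C.SS) (hτ : τ ∈ C.symm.SS)
    (hcov : C.Cov B s τ) (hhs : C.HS s τ) :
    ∃ s' τ', s' ∈ C.SS ∧ τ' ∈ C.symm.SS ∧ s ≤ s' ∧ τ ≤ τ' ∧ C.Cov B s' τ' ∧
      C.HS s' τ' ∧ C.symm.HS τ' s' := by
  classical
  set f : ℝ × ℝ → ℝ × ℝ := fun p => (C.nxt p.1 p.2, C.symm.nxt p.2 (C.nxt p.1 p.2)) with hf
  have once : ∀ p : ℝ × ℝ, p.1 ∈ C.SS → p.2 ∈ C.symm.SS → C.Cov B p.1 p.2 → C.HS p.1 p.2 →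
      (f p).1 ∈ C.SS ∧ (f p).2 ∈ C.symm.SS ∧ C.Cov B (f p).1 (f p).2 ∧ C.HS (f p).1 (f p).2 ∧
      p.1 ≤ (f p).1 ∧ p.2 ≤ (f p).2 ∧ C.symm.HS p.2 (f p).1 := by
    rintro ⟨ps, pτ⟩ h1 h2 h3 h4
    obtain ⟨hs1, hs2, hs3, hs4⟩ := C.step hB h1 h2 h3 h4
    obtain ⟨ht1, ht2, ht3, ht4⟩ := C.symm.step (B := B) (s := pτ) (τ := C.nxt ps pτ)
      hB h2 hs1 hs3.symm' hs4
    exact ⟨hs1, ht1, ht3.symm', ht4, hs2, ht2, hs4⟩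
  set P : ℕ → ℝ × ℝ := fun n => f^[n] (s, τ) with hP
  have hPsucc : ∀ n, P (n + 1) = f (P n) := fun n => Function.iterate_succ_apply' f n _
  have hinv : ∀ n, (P n).1 ∈ C.SS ∧ (P n).2 ∈ C.symm.SS ∧ C.Cov B (P n).1 (P n).2 ∧
      C.HS (P n).1 (P n).2 := by
    intro n
    induction n with
    | zero => exact ⟨hs, hτ, hcov, hhs⟩
    | succ n ih =>
      obtain ⟨h1, h2, h3, h4, _, _, _⟩ := once (P n) ih.1 ih.2.1 ih.2.2.1 ih.2.2.2
      rw [hPsucc]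
      exact ⟨h1, h2, h3, h4⟩
  have hstep : ∀ n, (P n).1 ≤ (P (n+1)).1 ∧ (P n).2 ≤ (P (n+1)).2 ∧
      C.symm.HS (P n).2 (P (n+1)).1 := by
    intro n
    obtain ⟨h1, h2, h3, h4⟩ := hinv n
    obtain ⟨_, _, _, _, h5, h6, h7⟩ := once (P n) h1 h2 h3 h4
    rw [hPsucc]
    exact ⟨h5, h6, h7⟩
  have hmono1 : Monotone fun n => (P n).1 := monotone_nat_of_le_succ fun n => (hstep n).1
  have hmono2 : Monotone fun n => (P n).2 := monotone_nat_of_le_succ fun n => (hstep n).2.1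
  have hbdd1 : BddAbove (Set.range fun n => (P n).1) := by
    refine ⟨1, ?_⟩; rintro x ⟨n, rfl⟩; exact (C.SS_subset (hinv n).1).2
  have hbdd2 : BddAbove (Set.range fun n => (P n).2) := by
    refine ⟨1, ?_⟩; rintro x ⟨n, rfl⟩; exact (C.symm.SS_subset (hinv n).2.1).2
  set Sl := ⨆ n, (P n).1 with hSldef
  set Tl := ⨆ n, (P n).2 with hTldef
  have hlim1 : Tendsto (fun n => (P n).1) atTop (𝓝 Sl) := tendsto_atTop_ciSup hmono1 hbdd1
  have hlim2 : Tendsto (fun n => (P n).2) atTop (𝓝 Tl) := tendsto_atTop_ciSup hmono2 hbdd2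
  have hle1 : ∀ n, (P n).1 ≤ Sl := fun n => le_ciSup hbdd1 n
  have hle2 : ∀ n, (P n).2 ≤ Tl := fun n => le_ciSup hbdd2 n
  have hSlS : Sl ∈ C.SS := C.mem_SS_of_tendsto (fun n => (hinv n).1) hlim1
  have hTlS : Tl ∈ C.symm.SS := C.symm.mem_SS_of_tendsto (fun n => (hinv n).2.1) hlim2
  have hP0 : P 0 = (s, τ) := rfl
  refine ⟨Sl, Tl, hSlS, hTlS, by rw [← hP0] at *; exact hle1 0, by rw [← hP0] at *; exact hle2 0,
    ?_, ?_, ?_⟩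
  · -- coverage at the limit
    rintro pt (⟨r, ⟨hr0, hr⟩, rfl⟩ | ⟨r, ⟨hr0, hr⟩, rfl⟩)
    · rcases eq_or_lt_of_le hr with h | h
      · rw [h]
        have : Tendsto (fun n => C.α ((P n).1)) atTop (𝓝 (C.α Sl)) :=
          eval_tendsto C.αc (fun n => C.SS_subset (hinv n).1) (C.SS_subset hSlS) hlim1
        exact (C.hclosed B hB).mem_of_tendsto this
          (Eventually.of_forall fun n => C.covα (hinv n).2.2.1 (C.SS_subset (hinv n).1).1 le_rfl)
      · obtain ⟨n, hn⟩ := (lt_ciSup_iff hbdd1).mp h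
        exact C.covα (hinv n).2.2.1 hr0 hn.le
    · rcases eq_or_lt_of_le hr with h | h
      · rw [h]
        have : Tendsto (fun n => C.β ((P n).2)) atTop (𝓝 (C.β Tl)) :=
          eval_tendsto C.βc (fun n => C.symm.SS_subset (hinv n).2.1) (C.symm.SS_subset hTlS) hlim2
        exact (C.hclosed B hB).mem_of_tendsto this
          (Eventually.of_forall fun n => C.covβ (hinv n).2.2.1 (C.symm.SS_subset (hinv n).2.1).1 le_rfl)
      · obtain ⟨n, hn⟩ := (lt_ciSup_iff hbdd2).mp h
        exact C.covβ (hinv n).2.2.1 hr0 hn.le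
  · -- HS at the limit
    intro s'' hs'' hle
    rcases eq_or_lt_of_le hle with h | h
    · subst h
      have hph := C.ph_tendsto (fun n => (hinv n).1) hSlS hlim1
      refine le_of_tendsto hph (Eventually.of_forall fun n => ?_)
      exact le_trans ((hinv n).2.2.2 _ (hinv n).1 le_rfl) (hle2 n)
    · obtain ⟨n, hn⟩ := (lt_ciSup_iff hbdd1).mp h
      exact le_trans ((hinv n).2.2.2 _ hs'' hn.le) (hle2 n)
  · -- symm HS at the limit
    intro τ'' hτ'' hle
    rcases eq_or_lt_of_le hle with h | h
    · subst h
      have hph := C.symm.ph_tendsto (fun n => (hinv n).2.1) hTlS hlim2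
      refine le_of_tendsto hph (Eventually.of_forall fun n => ?_)
      exact le_trans ((hstep n).2.2 _ (hinv n).2.1 le_rfl) (hle1 (n+1))
    · obtain ⟨n, hn⟩ := (lt_ciSup_iff hbdd2).mp h
      exact le_trans ((hstep n).2.2 _ hτ'' hn.le) (hle1 (n+1))

end Ctx
end Braid

namespace Braid
namespace Ctx

variable {Y : Type*} [MetricSpace Y] (C : Ctx Y)

/-- covered stable pairs -/
def Good : Set (ℝ × ℝ) :=
  {p | p.1 ∈ C.SS ∧ p.2 ∈ C.symm.SS ∧ C.HS p.1 p.2 ∧ C.symm.HS p.2 p.1 ∧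
    ∃ B ∈ C.B𝒻, C.Cov B p.1 p.2}

lemma cal_good {B : Set Y} {s τ : ℝ} (hB : B ∈ C.B𝒻) (hs : s ∈ C.SS) (hτ : τ ∈ C.symm.SS)
    (hcov : C.Cov B s τ) (hhs : C.HS s τ) : ∃ p ∈ C.Good, s ≤ p.1 ∧ τ ≤ p.2 := by
  obtain ⟨s', τ', h1, h2, h3, h4, h5, h6, h7⟩ := C.cal hB hs hτ hcov hhs
  exact ⟨(s', τ'), ⟨h1, h2, h6, h7, B, hB, h5⟩, h3, h4⟩

lemma cal_good_symm {B : Set Y} {s τ : ℝ} (hB : B ∈ C.B𝒻) (hs : s ∈ C.SS) (hτ : τ ∈ C.symm.SS)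
    (hcov : C.Cov B s τ) (hhs : C.symm.HS τ s) : ∃ p ∈ C.Good, s ≤ p.1 ∧ τ ≤ p.2 := by
  obtain ⟨τ', s', h1, h2, h3, h4, h5, h6, h7⟩ := C.symm.cal (B := B) hB hτ hs hcov.symm' hhs
  exact ⟨(s', τ'), ⟨h2, h1, h7, h6, B, hB, h5.symm'⟩, h4, h3⟩

lemma zero_mem_Good : ((0 : ℝ), (0 : ℝ)) ∈ C.Good := by
  have hz : ∀ (D : Ctx Y), D.HS 0 0 := by
    intro D s' hs' hle
    have : s' = 0 := le_antisymm hle (D.SS_subset hs').1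
    rw [this, D.ph_zero]
  refine ⟨C.zero_mem_SS, C.symm.zero_mem_SS, hz C, hz C.symm, ?_⟩
  have h01 : (0:ℝ) ∈ Ico (0:ℝ) 1 := ⟨le_rfl, zero_lt_one⟩
  have hcov0 : ∀ B : Set Y, C.α 0 ∈ B → C.Cov B 0 0 := by
    intro B hmem
    rintro pt (⟨r, ⟨h0, h1⟩, rfl⟩ | ⟨r, ⟨h0, h1⟩, rfl⟩) <;> rw [le_antisymm h1 h0]
    · exact hmem
    · rw [← C.h00]; exact hmem
  rcases C.habs 0 0 h01 h01 C.h00 with ⟨p, q, hp0, hp, _, hq, hq1, B, hB, hsub⟩ |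
    ⟨p, q, hp0, hp, _, hq, hq1, B, hB, hsub⟩
  · have hp' : p = 0 := le_antisymm hp hp0
    exact ⟨B, hB, hcov0 B (hsub ⟨0, ⟨by rw [hp'], hq.le⟩, rfl⟩)⟩
  · have hp' : p = 0 := le_antisymm hp hp0
    refine ⟨B, hB, hcov0 B ?_⟩
    rw [C.h00]
    exact hsub ⟨0, ⟨by rw [hp'], hq.le⟩, rfl⟩

lemma good_mono_2 {p q : ℝ × ℝ} (hp : p ∈ C.Good) (hq : q ∈ C.Good) (h : p.1 ≤ q.1) :
    p.2 ≤ q.2 := by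
  have h1 : C.symm.ph p.2 ≤ p.1 := hp.2.2.2.1 p.2 hp.2.1 le_rfl
  have h2 : C.ph (C.symm.ph p.2) = p.2 := C.symm.ph_ph hp.2.1
  calc p.2 = C.ph (C.symm.ph p.2) := h2.symm
    _ ≤ q.2 := hq.2.2.1 _ (C.symm.ph_mem_symm_SS hp.2.1) (h1.trans h)

lemma succ_of_lt {g t : ℝ} (hg : (g, t) ∈ C.Good) (hlt : g < 1) :
    ∃ p ∈ C.Good, g < p.1 ∨ t < p.2 := by
  obtain ⟨hgS, htS, hHS, hHSψ, B, hB, hcov⟩ := hg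
  have hgI : g ∈ Icc (0:ℝ) 1 := C.SS_subset hgS
  have htI : t ∈ Icc (0:ℝ) 1 := C.symm.SS_subset htS
  have ht1 : t < 1 := by
    rcases eq_or_lt_of_le htI.2 with h | h
    · exfalso
      have := hHSψ 1 C.symm.one_mem_SS (by rw [h])
      rw [C.symm.ph_one] at this
      exact absurd (this.trans_lt hlt) (lt_irrefl 1)
    · exact h
  have hφg : C.ph g ≤ t := hHS g hgS le_rfl
  set M : Set ℝ := {x | x ∈ C.SS ∧ g < x} with hMdef
  have h1M : (1:ℝ) ∈ M := ⟨C.one_mem_SS, hlt⟩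
  have hMbdd : BddBelow M := ⟨0, fun x hx => (C.SS_subset hx.1).1⟩
  set d := sInf M with hddef
  have hgd : g ≤ d := le_csInf ⟨1, h1M⟩ fun x hx => hx.2.le
  rcases eq_or_lt_of_le hgd with hacc | hgap
  · -- accumulation case
    have hacc' : ∀ n : ℕ, ∃ x, x ∈ C.SS ∧ g < x ∧ x < g + 1/(n+1) := by
      intro n
      have hpos : (0:ℝ) < 1/(n+1) := by positivity
      have : sInf M < g + 1/(n+1) := by rw [← hddef, ← hacc]; linarith
      obtain ⟨x, hxM, hxlt⟩ := csInf_lt_iff hMbdd ⟨1, h1M⟩ |>.mp this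
      exact ⟨x, hxM.1, hxM.2, hxlt⟩
    choose u hu1 hu2 hu3 using hacc'
    have hulim : Tendsto u atTop (𝓝 g) := by
      have hupper : Tendsto (fun n : ℕ => g + 1/(n+1:ℝ)) atTop (𝓝 g) := by
        have := (tendsto_one_div_add_atTop_nhds_zero_nat : Tendsto (fun n : ℕ => 1 / ((n:ℝ) + 1)) atTop (𝓝 0))
        have h2 := (tendsto_const_nhds (x := g) (f := atTop (α := ℕ))).add this
        simpa using h2
      exact tendsto_of_tendsto_of_tendsto_of_le_of_le tendsto_const_nhds hupper
        (fun n => (hu2 n).le) (fun n => (hu3 n).le)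
    have hphu_gt : ∀ n, t < C.ph (u n) := by
      intro n
      by_contra hcon
      push_neg at hcon
      have := hHSψ _ (C.ph_mem_symm_SS (hu1 n)) hcon
      rw [C.ph_ph (hu1 n)] at this
      exact absurd (hu2 n) (not_lt.mpr this)
    have hphu_lim : Tendsto (fun n => C.ph (u n)) atTop (𝓝 (C.ph g)) :=
      C.ph_tendsto hu1 hgS hulim
    have hφgeq : C.ph g = t :=
      le_antisymm hφg (ge_of_tendsto hphu_lim (Eventually.of_forall fun n => (hphu_gt n).le))
    have hαβ : C.α g = C.β t := by rw [← hφgeq]; exact (C.β_ph hgS).symm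
    rcases C.habs g t ⟨hgI.1, hlt⟩ ⟨htI.1, ht1⟩ hαβ with
      ⟨p, q, hp0, hpg, hpstrict, hgq, hq1, B', hB', hsub'⟩ |
      ⟨p, q, hp0, hpt, hpstrict, htq, hq1, B', hB', hsub'⟩
    · -- absorption along α around g
      obtain ⟨n, hn⟩ := (hulim.eventually (eventually_lt_nhds hgq)).exists
      by_cases ht0 : t = 0
      · -- degenerate coverage; replace B by B'
        have hg0 : g = 0 := by
          apply C.ph_injOn hgS C.zero_mem_SS
          rw [hφgeq, ht0, C.ph_zero]
        have hp' : p = 0 := le_antisymm (by rw [← hg0]; exact hpg) hp0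
        have hcov' : C.Cov B' (u n) t := by
          rintro pt (⟨r, ⟨h0, h1⟩, rfl⟩ | ⟨r, ⟨h0, h1⟩, rfl⟩)
          · exact hsub' ⟨r, ⟨by rw [hp']; exact h0, h1.trans hn.le⟩, rfl⟩
          · have : r = 0 := le_antisymm (h1.trans_eq ht0) h0
            rw [this, ← C.h00]
            exact hsub' ⟨0, ⟨by rw [hp'], (by rw [← hg0]; exact hgq.le)⟩, rfl⟩
        have hhsψ : C.symm.HS t (u n) := by
          intro τ'' hτ'' hle
          have : τ'' = 0 := le_antisymm (hle.trans_eq ht0) (C.symm.SS_subset hτ'').1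
          rw [this, C.symm.ph_zero]
          exact (C.SS_subset (hu1 n)).1
        obtain ⟨pp, hpp, hle1, _⟩ := C.cal_good_symm hB' (hu1 n) htS hcov' hhsψ
        exact ⟨pp, hpp, Or.inl (lt_of_lt_of_le (hu2 n) hle1)⟩
      · -- t > 0, g > 0; merge B' into B
        have ht0' : 0 < t := lt_of_le_of_ne htI.1 (Ne.symm ht0)
        have hg0' : 0 < g := by
          rcases eq_or_lt_of_le hgI.1 with h | h
          · exfalso; apply ht0
            rw [← hφgeq, ← h, C.ph_zero]
          · exact h
        have hpltg : p < g := hpstrict hg0'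
        have hBeq : B = B' := by
          refine C.merge hB hB' (x := C.α p) (y := C.α g) ?_ ?_ ?_ ?_ ?_
          · exact C.covα hcov hp0 hpltg.le
          · exact hsub' ⟨p, ⟨le_rfl, hpltg.le.trans hgq.le⟩, rfl⟩
          · exact C.covα hcov hgI.1 le_rfl
          · exact hsub' ⟨g, ⟨hpltg.le, hgq.le⟩, rfl⟩
          · intro h
            exact absurd (C.αi ⟨hp0, hpltg.le.trans hgI.2⟩ hgI h) (ne_of_lt hpltg)
        have hcov' : C.Cov B (u n) t := by
          rintro pt (⟨r, ⟨h0, h1⟩, rfl⟩ | ⟨r, ⟨h0, h1⟩, rfl⟩)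
          · rcases le_total r g with h | h
            · exact C.covα hcov h0 h
            · rw [hBeq]
              exact hsub' ⟨r, ⟨hpltg.le.trans h, h1.trans hn.le⟩, rfl⟩
          · exact C.covβ hcov h0 h1
        have hhsψ : C.symm.HS t (u n) := by
          intro τ'' hτ'' hle
          exact (hHSψ τ'' hτ'' hle).trans (hu2 n).le
        obtain ⟨pp, hpp, hle1, _⟩ := C.cal_good_symm hB (hu1 n) htS hcov' hhsψ
        exact ⟨pp, hpp, Or.inl (lt_of_lt_of_le (hu2 n) hle1)⟩
    · -- absorption along β around t
      have hq' : t < q := htq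
      obtain ⟨n, hn⟩ := ((hphu_lim.eventually (eventually_lt_nhds (hφgeq.symm ▸ hq' : C.ph g < q)))).exists
      set τ' := C.ph (u n) with hτ'def
      have hτ'S : τ' ∈ C.symm.SS := C.ph_mem_symm_SS (hu1 n)
      by_cases ht0 : t = 0
      · have hp' : p = 0 := le_antisymm (hpt.trans_eq ht0) hp0
        have hg0 : g = 0 := by
          apply C.ph_injOn hgS C.zero_mem_SS
          rw [hφgeq, ht0, C.ph_zero]
        have hcov' : C.Cov B' g τ' := by
          rintro pt (⟨r, ⟨h0, h1⟩, rfl⟩ | ⟨r, ⟨h0, h1⟩, rfl⟩)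
          · have : r = 0 := le_antisymm (h1.trans_eq hg0) h0
            rw [this, C.h00]
            exact hsub' ⟨0, ⟨by rw [hp'], (htq.le.trans_eq' ht0)⟩, rfl⟩
          · exact hsub' ⟨r, ⟨by rw [hp']; exact h0, h1.trans hn.le⟩, rfl⟩
        have hhs' : C.HS g τ' := by
          intro s'' hs'' hle
          exact (hHS s'' hs'' hle).trans (hphu_gt n).le
        obtain ⟨pp, hpp, _, hle2⟩ := C.cal_good hB' hgS hτ'S hcov' hhs'
        exact ⟨pp, hpp, Or.inr (lt_of_lt_of_le (hphu_gt n) hle2)⟩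
      · have ht0' : 0 < t := lt_of_le_of_ne htI.1 (Ne.symm ht0)
        have hpltt : p < t := hpstrict ht0'
        have hBeq : B = B' := by
          refine C.merge hB hB' (x := C.β p) (y := C.β t) ?_ ?_ ?_ ?_ ?_
          · exact C.covβ hcov hp0 hpltt.le
          · exact hsub' ⟨p, ⟨le_rfl, hpltt.le.trans htq.le⟩, rfl⟩
          · exact C.covβ hcov htI.1 le_rfl
          · exact hsub' ⟨t, ⟨hpltt.le, htq.le⟩, rfl⟩
          · intro h
            exact absurd (C.βi ⟨hp0, hpltt.le.trans htI.2⟩ htI h) (ne_of_lt hpltt)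
        have hcov' : C.Cov B g τ' := by
          rintro pt (⟨r, ⟨h0, h1⟩, rfl⟩ | ⟨r, ⟨h0, h1⟩, rfl⟩)
          · exact C.covα hcov h0 h1
          · rcases le_total r t with h | h
            · exact C.covβ hcov h0 h
            · rw [hBeq]
              exact hsub' ⟨r, ⟨hpltt.le.trans h, h1.trans hn.le⟩, rfl⟩
        have hhs' : C.HS g τ' := by
          intro s'' hs'' hle
          exact (hHS s'' hs'' hle).trans (hphu_gt n).le
        obtain ⟨pp, hpp, _, hle2⟩ := C.cal_good hB hgS hτ'S hcov' hhs'
        exact ⟨pp, hpp, Or.inr (lt_of_lt_of_le (hphu_gt n) hle2)⟩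
  · -- gap case : g < d
    have hdM : d ∈ M := by
      have hclosed : d ∈ closure M := csInf_mem_closure ⟨1, h1M⟩ hMbdd
      have hMsub : M ⊆ C.SS := fun x hx => hx.1
      have hdS : d ∈ C.SS := by
        have := closure_mono hMsub hclosed
        rwa [C.SS_closed.closure_eq] at this
      exact ⟨hdS, hgap⟩
    have hdS : d ∈ C.SS := hdM.1
    have hdI : d ∈ Icc (0:ℝ) 1 := C.SS_subset hdS
    have hgapempty : ∀ x ∈ C.SS, x ∉ Ioo g d := by
      intro x hx hxoo
      exact absurd (csInf_le hMbdd ⟨hx, hxoo.1⟩) (not_le.mpr hxoo.2)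
    have hφd_t : t < C.ph d := by
      by_contra hcon
      push_neg at hcon
      have := hHSψ _ (C.ph_mem_symm_SS hdS) hcon
      rw [C.ph_ph hdS] at this
      exact absurd hgap (not_lt.mpr this)
    have hφgI : C.ph g ∈ Icc (0:ℝ) 1 := C.ph_mem hgS
    have hφdI : C.ph d ∈ Icc (0:ℝ) 1 := C.ph_mem hdS
    have hends : ({C.α g, C.α d} : Set Y) = {C.β (C.ph g), C.β (C.ph d)} := by
      rw [C.β_ph hgS, C.β_ph hdS]
    have hinter : C.α '' Icc g d ∩ C.β '' Icc (C.ph g) (C.ph d) ⊆ {C.α g, C.α d} := by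
      rintro pt ⟨⟨x, hxm, rfl⟩, ⟨y, hym, hye⟩⟩
      have hxI : x ∈ Icc (0:ℝ) 1 := ⟨hgI.1.trans hxm.1, hxm.2.trans hdI.2⟩
      have hyI : y ∈ Icc (0:ℝ) 1 := ⟨hφgI.1.trans hym.1, hym.2.trans hφdI.2⟩
      have hxS : x ∈ C.SS := ⟨hxI, ⟨y, hyI, hye⟩⟩
      rcases eq_or_lt_of_le hxm.1 with h | h
      · exact Or.inl (by rw [← h])
      rcases eq_or_lt_of_le hxm.2 with h2 | h2
      · exact Or.inr (by rw [h2]; rfl)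
      · exact absurd ⟨h, h2⟩ (hgapempty x hxS)
    obtain ⟨BD, hBD, hsubD⟩ := C.hgap g d (C.ph g) (C.ph d) hgI hdI hφgI hφdI
      hgap.le (hφg.trans hφd_t.le) (Or.inl hgap) hends hinter
    -- get the new coverage into a single member
    have key : ∃ B'' ∈ C.B𝒻, C.Cov B'' d (C.ph d) := by
      by_cases hφgt : C.ph g < t
      · have hBeq : B = BD := by
          refine C.merge hB hBD (x := C.β (C.ph g)) (y := C.β t) ?_ ?_ ?_ ?_ ?_
          · exact C.covβ hcov hφgI.1 hφg
          · exact hsubD (Or.inr ⟨C.ph g, ⟨le_rfl, hφg.trans hφd_t.le⟩, rfl⟩)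
          · exact C.covβ hcov htI.1 le_rfl
          · exact hsubD (Or.inr ⟨t, ⟨hφgt.le, hφd_t.le⟩, rfl⟩)
          · intro h
            exact absurd (C.βi hφgI htI h) (ne_of_lt hφgt)
        refine ⟨B, hB, ?_⟩
        rintro pt (⟨r, ⟨h0, h1⟩, rfl⟩ | ⟨r, ⟨h0, h1⟩, rfl⟩)
        · rcases le_total r g with h | h
          · exact C.covα hcov h0 h
          · rw [hBeq]; exact hsubD (Or.inl ⟨r, ⟨h, h1⟩, rfl⟩)
        · rcases le_total r t with h | h
          · exact C.covβ hcov h0 h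
          · rw [hBeq]
            exact hsubD (Or.inr ⟨r, ⟨hφg.trans h, h1⟩, rfl⟩)
      · have hφgeq : C.ph g = t := le_antisymm hφg (not_lt.mp hφgt)
        by_cases ht0 : t = 0
        · -- replace B by BD
          have hg0 : g = 0 := by
            apply C.ph_injOn hgS C.zero_mem_SS
            rw [hφgeq, ht0, C.ph_zero]
          refine ⟨BD, hBD, ?_⟩
          rintro pt (⟨r, ⟨h0, h1⟩, rfl⟩ | ⟨r, ⟨h0, h1⟩, rfl⟩)
          · exact hsubD (Or.inl ⟨r, ⟨by rw [hg0]; exact h0, h1⟩, rfl⟩)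
          · refine hsubD (Or.inr ⟨r, ⟨?_, h1⟩, rfl⟩)
            rw [hφgeq, ht0]; exact h0
        · have ht0' : 0 < t := lt_of_le_of_ne htI.1 (Ne.symm ht0)
          have hg0' : 0 < g := by
            rcases eq_or_lt_of_le hgI.1 with h | h
            · exfalso; apply ht0; rw [← hφgeq, ← h, C.ph_zero]
            · exact h
          have hαβ : C.α g = C.β t := by rw [← hφgeq]; exact (C.β_ph hgS).symm
          rcases C.habs g t ⟨hgI.1, hlt⟩ ⟨htI.1, ht1⟩ hαβ with
            ⟨p, q, hp0, hpg, hpstrict, hgq, hq1, B', hB', hsub'⟩ |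
            ⟨p, q, hp0, hpt, hpstrict, htq, hq1, B', hB', hsub'⟩
          · have hpltg : p < g := hpstrict hg0'
            have hBeq : B = B' := by
              refine C.merge hB hB' (x := C.α p) (y := C.α g) ?_ ?_ ?_ ?_ ?_
              · exact C.covα hcov hp0 hpltg.le
              · exact hsub' ⟨p, ⟨le_rfl, hpltg.le.trans hgq.le⟩, rfl⟩
              · exact C.covα hcov hgI.1 le_rfl
              · exact hsub' ⟨g, ⟨hpltg.le, hgq.le⟩, rfl⟩
              · intro h
                exact absurd (C.αi ⟨hp0, hpltg.le.trans hgI.2⟩ hgI h) (ne_of_lt hpltg)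
            have hBD' : B = BD := by
              refine C.merge hB hBD (x := C.α g) (y := C.α (min q d)) ?_ ?_ ?_ ?_ ?_
              · exact C.covα hcov hgI.1 le_rfl
              · exact hsubD (Or.inl ⟨g, ⟨le_rfl, hgap.le⟩, rfl⟩)
              · rw [hBeq]
                exact hsub' ⟨min q d, ⟨hpltg.le.trans (le_min hgq.le hgap.le), min_le_left _ _⟩, rfl⟩
              · exact hsubD (Or.inl ⟨min q d, ⟨le_min hgq.le hgap.le, min_le_right _ _⟩, rfl⟩)
              · intro h
                have hglt : g < min q d := lt_min hgq hgap
                have hminI : min q d ∈ Icc (0:ℝ) 1 := ⟨hgI.1.trans (le_min hgq.le hgap.le),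
                  (min_le_right _ _).trans hdI.2⟩
                exact absurd (C.αi hgI hminI h) (ne_of_lt hglt)
            refine ⟨B, hB, ?_⟩
            rintro pt (⟨r, ⟨h0, h1⟩, rfl⟩ | ⟨r, ⟨h0, h1⟩, rfl⟩)
            · rcases le_total r g with h | h
              · exact C.covα hcov h0 h
              · rw [hBD']; exact hsubD (Or.inl ⟨r, ⟨h, h1⟩, rfl⟩)
            · rcases le_total r t with h | h
              · exact C.covβ hcov h0 h
              · rw [hBD']
                exact hsubD (Or.inr ⟨r, ⟨hφgeq.trans_le h, h1⟩, rfl⟩)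
          · have hpltt : p < t := hpstrict ht0'
            have hBeq : B = B' := by
              refine C.merge hB hB' (x := C.β p) (y := C.β t) ?_ ?_ ?_ ?_ ?_
              · exact C.covβ hcov hp0 hpltt.le
              · exact hsub' ⟨p, ⟨le_rfl, hpltt.le.trans htq.le⟩, rfl⟩
              · exact C.covβ hcov htI.1 le_rfl
              · exact hsub' ⟨t, ⟨hpltt.le, htq.le⟩, rfl⟩
              · intro h
                exact absurd (C.βi ⟨hp0, hpltt.le.trans htI.2⟩ htI h) (ne_of_lt hpltt)
            have hBD' : B = BD := by
              refine C.merge hB hBD (x := C.β t) (y := C.β (min q (C.ph d))) ?_ ?_ ?_ ?_ ?_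
              · exact C.covβ hcov htI.1 le_rfl
              · exact hsubD (Or.inr ⟨t, ⟨hφgeq.le, hφd_t.le⟩, rfl⟩)
              · rw [hBeq]
                exact hsub' ⟨min q (C.ph d), ⟨hpltt.le.trans (le_min htq.le hφd_t.le),
                  min_le_left _ _⟩, rfl⟩
              · exact hsubD (Or.inr ⟨min q (C.ph d), ⟨le_min (hφgeq.le.trans htq.le)
                  (hφgeq.le.trans hφd_t.le), min_le_right _ _⟩, rfl⟩)
              · intro h
                have htlt : t < min q (C.ph d) := lt_min htq hφd_t
                have hminI : min q (C.ph d) ∈ Icc (0:ℝ) 1 := ⟨htI.1.trans (le_min htq.le hφd_t.le),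
                  (min_le_right _ _).trans hφdI.2⟩
                exact absurd (C.βi htI hminI h) (ne_of_lt htlt)
            refine ⟨B, hB, ?_⟩
            rintro pt (⟨r, ⟨h0, h1⟩, rfl⟩ | ⟨r, ⟨h0, h1⟩, rfl⟩)
            · rcases le_total r g with h | h
              · exact C.covα hcov h0 h
              · rw [hBD']; exact hsubD (Or.inl ⟨r, ⟨h, h1⟩, rfl⟩)
            · rcases le_total r t with h | h
              · exact C.covβ hcov h0 h
              · rw [hBD']
                exact hsubD (Or.inr ⟨r, ⟨hφgeq.trans_le h, h1⟩, rfl⟩)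
    obtain ⟨B'', hB'', hcov''⟩ := key
    have hhs'' : C.HS d (C.ph d) := by
      intro s'' hs'' hle
      rcases eq_or_lt_of_le hle with h | h
      · rw [C.ph_injOn hs'' hdS (by rw [h])]
      · rcases le_total s'' g with h2 | h2
        · exact (hHS s'' hs'' h2).trans hφd_t.le
        · rcases eq_or_lt_of_le h2 with h3 | h3
          · rw [← h3]
            exact hφg.trans hφd_t.le
          · exact absurd ⟨h3, h⟩ (hgapempty s'' hs'')
    obtain ⟨pp, hpp, hle1, _⟩ := C.cal_good hB'' hdS (C.ph_mem_symm_SS hdS) hcov'' hhs''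
    exact ⟨pp, hpp, Or.inl (lt_of_lt_of_le hgap hle1)⟩

end Ctx
end Braid

namespace Braid
namespace Ctx

variable {Y : Type*} [MetricSpace Y] (C : Ctx Y)

theorem core : ∃ B ∈ C.B𝒻, C.α '' Icc 0 1 ∪ C.β '' Icc 0 1 ⊆ B := by
  classical
  set G1 := Prod.fst '' C.Good with hG1def
  set G2 := Prod.snd '' C.Good with hG2def
  have hne1 : G1.Nonempty := ⟨0, ⟨(0, 0), C.zero_mem_Good, rfl⟩⟩
  have hne2 : G2.Nonempty := ⟨0, ⟨(0, 0), C.zero_mem_Good, rfl⟩⟩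
  have hb1 : BddAbove G1 := by
    refine ⟨1, ?_⟩; rintro x ⟨p, hp, rfl⟩; exact (C.SS_subset hp.1).2
  have hb2 : BddAbove G2 := by
    refine ⟨1, ?_⟩; rintro x ⟨p, hp, rfl⟩; exact (C.symm.SS_subset hp.2.1).2
  set g := sSup G1 with hgdef
  set t := sSup G2 with htdef
  have hg1 : g ≤ 1 := csSup_le hne1 (by rintro x ⟨p, hp, rfl⟩; exact (C.SS_subset hp.1).2)
  have ht1 : t ≤ 1 := csSup_le hne2 (by rintro x ⟨p, hp, rfl⟩; exact (C.symm.SS_subset hp.2.1).2)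
  have hg0 : (0:ℝ) ≤ g := le_csSup hb1 ⟨(0, 0), C.zero_mem_Good, rfl⟩
  have ht0 : (0:ℝ) ≤ t := le_csSup hb2 ⟨(0, 0), C.zero_mem_Good, rfl⟩
  have hseq : ∀ n : ℕ, ∃ p ∈ C.Good, g - 1/(n+1) < p.1 ∧ t - 1/(n+1) < p.2 := by
    intro n
    have hpos : (0:ℝ) < 1/(n+1) := by positivity
    obtain ⟨x1, ⟨p1, hp1, rfl⟩, hx1⟩ := exists_lt_of_lt_csSup hne1
      (show g - 1/(n+1) < g by linarith)
    obtain ⟨x2, ⟨p2, hp2, rfl⟩, hx2⟩ := exists_lt_of_lt_csSup hne2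
      (show t - 1/(n+1) < t by linarith)
    rcases le_total p1.1 p2.1 with h | h
    · exact ⟨p2, hp2, lt_of_lt_of_le hx1 h, hx2⟩
    · exact ⟨p1, hp1, hx1, lt_of_lt_of_le hx2 (C.good_mono_2 hp2 hp1 h)⟩
  choose pn hpnG hpn1 hpn2 using hseq
  have hle1' : ∀ n, (pn n).1 ≤ g := fun n => le_csSup hb1 ⟨pn n, hpnG n, rfl⟩
  have hle2' : ∀ n, (pn n).2 ≤ t := fun n => le_csSup hb2 ⟨pn n, hpnG n, rfl⟩
  have hlow : Tendsto (fun n : ℕ => g - 1/(n+1:ℝ)) atTop (𝓝 g) := by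
    have := (tendsto_one_div_add_atTop_nhds_zero_nat : Tendsto (fun n : ℕ => 1 / ((n:ℝ) + 1)) atTop (𝓝 0))
    have h2 := (tendsto_const_nhds (x := g) (f := atTop (α := ℕ))).sub this
    simpa using h2
  have hlow2 : Tendsto (fun n : ℕ => t - 1/(n+1:ℝ)) atTop (𝓝 t) := by
    have := (tendsto_one_div_add_atTop_nhds_zero_nat : Tendsto (fun n : ℕ => 1 / ((n:ℝ) + 1)) atTop (𝓝 0))
    have h2 := (tendsto_const_nhds (x := t) (f := atTop (α := ℕ))).sub this
    simpa using h2
  have hlim1 : Tendsto (fun n => (pn n).1) atTop (𝓝 g) :=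
    tendsto_of_tendsto_of_tendsto_of_le_of_le hlow tendsto_const_nhds
      (fun n => (hpn1 n).le) hle1'
  have hlim2 : Tendsto (fun n => (pn n).2) atTop (𝓝 t) :=
    tendsto_of_tendsto_of_tendsto_of_le_of_le hlow2 tendsto_const_nhds
      (fun n => (hpn2 n).le) hle2'
  have hgS : g ∈ C.SS := C.mem_SS_of_tendsto (fun n => (hpnG n).1) hlim1
  have htS : t ∈ C.symm.SS := C.symm.mem_SS_of_tendsto (fun n => (hpnG n).2.1) hlim2
  have hHS : C.HS g t := by
    intro s'' hs'' hle
    rcases eq_or_lt_of_le hle with h | h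
    · rw [h]
      have hph := C.ph_tendsto (fun n => (hpnG n).1) hgS hlim1
      refine le_of_tendsto hph (Eventually.of_forall fun n => ?_)
      exact ((hpnG n).2.2.1 _ (hpnG n).1 le_rfl).trans (hle2' n)
    · obtain ⟨x, ⟨p, hp, rfl⟩, hx⟩ := exists_lt_of_lt_csSup hne1 h
      exact ((hp.2.2.1) s'' hs'' hx.le).trans (le_csSup hb2 ⟨p, hp, rfl⟩)
  have hHSψ : C.symm.HS t g := by
    intro τ'' hτ'' hle
    rcases eq_or_lt_of_le hle with h | h
    · rw [h]
      have hph := C.symm.ph_tendsto (fun n => (hpnG n).2.1) htS hlim2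
      refine le_of_tendsto hph (Eventually.of_forall fun n => ?_)
      exact ((hpnG n).2.2.2.1 _ (hpnG n).2.1 le_rfl).trans (hle1' n)
    · obtain ⟨x, ⟨p, hp, rfl⟩, hx⟩ := exists_lt_of_lt_csSup hne2 h
      exact ((hp.2.2.2.1) τ'' hτ'' hx.le).trans (le_csSup hb1 ⟨p, hp, rfl⟩)
  have hcovB : ∃ B ∈ C.B𝒻, C.Cov B g t := by
    by_cases hzero : g = 0 ∧ t = 0
    · obtain ⟨_, _, _, _, B, hB, hcov⟩ := C.zero_mem_Good
      exact ⟨B, hB, by rw [hzero.1, hzero.2]; exact hcov⟩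
    · have hanch : ∃ p₀ ∈ C.Good, 0 < p₀.1 ∨ 0 < p₀.2 := by
        rcases not_and_or.mp hzero with h | h
        · obtain ⟨x, ⟨p, hp, rfl⟩, hx⟩ := exists_lt_of_lt_csSup hne1
            (lt_of_le_of_ne hg0 (Ne.symm h))
          exact ⟨p, hp, Or.inl hx⟩
        · obtain ⟨x, ⟨p, hp, rfl⟩, hx⟩ := exists_lt_of_lt_csSup hne2
            (lt_of_le_of_ne ht0 (Ne.symm h))
          exact ⟨p, hp, Or.inr hx⟩
      obtain ⟨p₀, hp₀, hp₀pos⟩ := hanch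
      obtain ⟨h₀1, h₀2, h₀3, h₀4, B₀, hB₀, hcov₀⟩ := id hp₀
      set z₁ := C.α 0 with hz₁def
      have hz₁mem : ∀ (B' : Set Y) (q : ℝ × ℝ), q ∈ C.Good → C.Cov B' q.1 q.2 → z₁ ∈ B' :=
        fun B' q hq hcov' => C.covα hcov' le_rfl (C.SS_subset hq.1).1
      have hz2 : ∃ z₂ : Y, z₂ ≠ z₁ ∧ ∀ (B' : Set Y) (q : ℝ × ℝ), q ∈ C.Good → p₀.1 ≤ q.1 →
          C.Cov B' q.1 q.2 → z₂ ∈ B' := by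
        rcases hp₀pos with h | h
        · refine ⟨C.α p₀.1, ?_, ?_⟩
          · intro he
            exact (ne_of_gt h) (C.αi (C.SS_subset h₀1) ⟨le_rfl, zero_le_one⟩ he)
          · intro B' q hq hle hcov'
            exact C.covα hcov' (C.SS_subset h₀1).1 hle
        · refine ⟨C.β p₀.2, ?_, ?_⟩
          · intro he
            rw [hz₁def, C.h00] at he
            exact (ne_of_gt h) (C.βi (C.symm.SS_subset h₀2) ⟨le_rfl, zero_le_one⟩ he)
          · intro B' q hq hle hcov'
            exact C.covβ hcov' (C.symm.SS_subset h₀2).1 (C.good_mono_2 hp₀ hq hle)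
      obtain ⟨z₂, hz₂ne, hz₂mem⟩ := hz2
      have claimA : ∀ q ∈ C.Good, ∀ x, x ∈ C.α '' Icc 0 q.1 ∪ C.β '' Icc 0 q.2 → x ∈ B₀ := by
        intro q hq x hx
        rcases le_total q.1 p₀.1 with h | h
        · have h2 : q.2 ≤ p₀.2 := C.good_mono_2 hq hp₀ h
          rcases hx with ⟨r, ⟨h0, h1⟩, rfl⟩ | ⟨r, ⟨h0, h1⟩, rfl⟩
          · exact C.covα hcov₀ h0 (h1.trans h)
          · exact C.covβ hcov₀ h0 (h1.trans h2)
        · obtain ⟨_, _, _, _, Bq, hBq, hcovq⟩ := id hq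
          have hBeq : Bq = B₀ := C.merge hBq hB₀
            (hz₁mem Bq q hq hcovq) (hz₁mem B₀ p₀ hp₀ hcov₀)
            (hz₂mem Bq q hq h hcovq) (hz₂mem B₀ p₀ hp₀ le_rfl hcov₀) (Ne.symm hz₂ne)
          exact hBeq ▸ hcovq hx
      refine ⟨B₀, hB₀, ?_⟩
      rintro pt (⟨r, ⟨h0, h1⟩, rfl⟩ | ⟨r, ⟨h0, h1⟩, rfl⟩)
      · rcases eq_or_lt_of_le h1 with h | h
        · rw [h]
          have hev := eval_tendsto C.αc (fun n => C.SS_subset (hpnG n).1) (C.SS_subset hgS) hlim1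
          refine (C.hclosed B₀ hB₀).mem_of_tendsto hev (Eventually.of_forall fun n => ?_)
          exact claimA (pn n) (hpnG n) _
            (Or.inl ⟨(pn n).1, ⟨(C.SS_subset (hpnG n).1).1, le_rfl⟩, rfl⟩)
        · obtain ⟨x, ⟨p, hp, rfl⟩, hx⟩ := exists_lt_of_lt_csSup hne1 h
          exact claimA p hp _ (Or.inl ⟨r, ⟨h0, hx.le⟩, rfl⟩)
      · rcases eq_or_lt_of_le h1 with h | h
        · rw [h]
          have hev := eval_tendsto C.βc (fun n => C.symm.SS_subset (hpnG n).2.1)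
            (C.symm.SS_subset htS) hlim2
          refine (C.hclosed B₀ hB₀).mem_of_tendsto hev (Eventually.of_forall fun n => ?_)
          exact claimA (pn n) (hpnG n) _
            (Or.inr ⟨(pn n).2, ⟨(C.symm.SS_subset (hpnG n).2.1).1, le_rfl⟩, rfl⟩)
        · obtain ⟨x, ⟨p, hp, rfl⟩, hx⟩ := exists_lt_of_lt_csSup hne2 h
          exact claimA p hp _ (Or.inr ⟨r, ⟨h0, hx.le⟩, rfl⟩)
  obtain ⟨B, hB, hcov⟩ := hcovB
  have hGood : (g, t) ∈ C.Good := ⟨hgS, htS, hHS, hHSψ, B, hB, hcov⟩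
  have hg1' : g = 1 := by
    rcases eq_or_lt_of_le hg1 with h | h
    · exact h
    exfalso
    obtain ⟨p, hp, hor⟩ := C.succ_of_lt hGood h
    rcases hor with h2 | h2
    · exact absurd (le_csSup hb1 ⟨p, hp, rfl⟩) (not_le.mpr h2)
    · exact absurd (le_csSup hb2 ⟨p, hp, rfl⟩) (not_le.mpr h2)
  have ht1' : t = 1 := by
    have := hHS 1 C.one_mem_SS (by rw [hg1'])
    rw [C.ph_one] at this
    exact le_antisymm ht1 this
  refine ⟨B, hB, ?_⟩
  rw [hg1', ht1'] at hcov
  exact hcov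

end Ctx
end Braid

namespace Braid

open Set

lemma image_affine_Icc (m k c d : ℝ) (hk : 0 < k) :
    (fun r => m + r * k) '' Icc c d = Icc (m + c * k) (m + d * k) := by
  ext x
  simp only [mem_image, mem_Icc]
  constructor
  · rintro ⟨r, ⟨h1, h2⟩, rfl⟩
    constructor <;> nlinarith
  · rintro ⟨h1, h2⟩
    refine ⟨(x - m) / k, ⟨?_, ?_⟩, ?_⟩
    · rw [le_div_iff₀ hk]; linarith
    · rw [div_le_iff₀ hk]; linarith
    · field_simp; ring

lemma image_affine_Icc_dec (m k c d : ℝ) (hk : 0 < k) :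
    (fun r => m - r * k) '' Icc c d = Icc (m - d * k) (m - c * k) := by
  ext x
  simp only [mem_image, mem_Icc]
  constructor
  · rintro ⟨r, ⟨h1, h2⟩, rfl⟩
    constructor <;> nlinarith
  · rintro ⟨h1, h2⟩
    refine ⟨(m - x) / k, ⟨?_, ?_⟩, ?_⟩
    · rw [le_div_iff₀ hk]; linarith
    · rw [div_le_iff₀ hk]; linarith
    · field_simp; ring

lemma arc_image {Y : Type*} (f : ℝ → Y) (m k c d : ℝ) (hk : 0 < k) :
    (fun r => f (m + r * k)) '' Icc c d = f '' Icc (m + c * k) (m + d * k) := by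
  rw [show (fun r => f (m + r * k)) = f ∘ (fun r => m + r * k) from rfl, image_comp,
    image_affine_Icc m k c d hk]

lemma arc_image_dec {Y : Type*} (f : ℝ → Y) (m k c d : ℝ) (hk : 0 < k) :
    (fun r => f (m - r * k)) '' Icc c d = f '' Icc (m - d * k) (m - c * k) := by
  rw [show (fun r => f (m - r * k)) = f ∘ (fun r => m - r * k) from rfl, image_comp,
    image_affine_Icc_dec m k c d hk]

/-- Around any point of `γ` off `L`, a maximal simple bigon of `γ` and `L` absorbs a
two-sided sub-arc of `γ` into a member of `𝓑`. -/
lemma exists_absorb {Y : Type*} [MetricSpace Y] {𝓑 : Set (Set Y)} {γ L : TopArc Y}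
    (h3 : ∀ T : TBigon γ L, T.Simple → T.Nontrivial → ∃ B ∈ 𝓑, T.carrier ⊆ B)
    (h0 : γ.toFun 0 ∈ L.image) (h1 : γ.toFun 1 ∈ L.image)
    {s : ℝ} (hs : s ∈ Icc (0:ℝ) 1) (hz : γ.toFun s ∉ L.image) :
    ∃ p q : ℝ, 0 ≤ p ∧ p < s ∧ s < q ∧ q ≤ 1 ∧ ∃ B ∈ 𝓑, γ.toFun '' Icc p q ⊆ B := by
  classical
  set K : Set ℝ := Icc (0:ℝ) 1 ∩ γ.toFun ⁻¹' L.image with hKdef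
  have hKclosed : IsClosed K := by
    refine γ.cont.preimage_isClosed_of_isClosed isClosed_Icc ?_
    exact ((isCompact_Icc).image_of_continuousOn L.cont).isClosed
  have h0K : (0:ℝ) ∈ K := ⟨⟨le_rfl, zero_le_one⟩, h0⟩
  have h1K : (1:ℝ) ∈ K := ⟨⟨zero_le_one, le_rfl⟩, h1⟩
  have hsK : s ∉ K := fun h => hz h.2
  have hp_set : IsClosed (K ∩ Icc 0 s) := hKclosed.inter isClosed_Icc
  have hp_ne : (K ∩ Icc 0 s).Nonempty := ⟨0, h0K, le_rfl, hs.1⟩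
  have hp_bdd : BddAbove (K ∩ Icc 0 s) := BddAbove.mono Set.inter_subset_right bddAbove_Icc
  set p := sSup (K ∩ Icc 0 s) with hpdef
  have hpmem : p ∈ K ∩ Icc 0 s := hp_set.csSup_mem hp_ne hp_bdd
  have hps : p < s := lt_of_le_of_ne hpmem.2.2 fun h => hsK (h ▸ hpmem.1)
  have hq_set : IsClosed (K ∩ Icc s 1) := hKclosed.inter isClosed_Icc
  have hq_ne : (K ∩ Icc s 1).Nonempty := ⟨1, h1K, hs.2, le_rfl⟩
  have hq_bdd : BddBelow (K ∩ Icc s 1) := BddBelow.mono Set.inter_subset_right bddBelow_Icc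
  set q := sInf (K ∩ Icc s 1) with hqdef
  have hqmem : q ∈ K ∩ Icc s 1 := hq_set.csInf_mem hq_ne hq_bdd
  have hsq : s < q := lt_of_le_of_ne hqmem.2.1 fun h => hsK (h.symm ▸ hqmem.1)
  have hgapempty : ∀ x ∈ K, x ∉ Ioo p q := by
    intro x hx hxoo
    rcases le_total x s with h | h
    · exact absurd (le_csSup hp_bdd ⟨hx, (hx.1.1 : (0:ℝ) ≤ x), h⟩) (not_le.mpr hxoo.1)
    · exact absurd (csInf_le hq_bdd ⟨hx, h, hx.1.2⟩) (not_le.mpr hxoo.2)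
  have hpq : p < q := hps.trans hsq
  have hpI : p ∈ Icc (0:ℝ) 1 := hpmem.1.1
  have hqI : q ∈ Icc (0:ℝ) 1 := hqmem.1.1
  obtain ⟨lp, hlpI, hlp⟩ := hpmem.1.2
  obtain ⟨lq, hlqI, hlq⟩ := hqmem.1.2
  have hγpq : γ.toFun p ≠ γ.toFun q := fun h => (ne_of_lt hpq) (γ.inj hpI hqI h)
  have hlne : lp ≠ lq := fun h => hγpq (by rw [← hlp, ← hlq, h])
  have hminI : min lp lq ∈ Icc (0:ℝ) 1 := ⟨le_min hlpI.1 hlqI.1, (min_le_left _ _).trans hlpI.2⟩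
  have hmaxI : max lp lq ∈ Icc (0:ℝ) 1 := ⟨hlpI.1.trans (le_max_left _ _), max_le hlpI.2 hlqI.2⟩
  set T : TBigon γ L :=
    { a₁ := p, b₁ := q, a₂ := min lp lq, b₂ := max lp lq
      ha₁ := hpI, hb₁ := hqI, ha₂ := hminI, hb₂ := hmaxI
      hle₁ := hpq.le, hle₂ := min_le_max
      ends_eq := by
        rcases le_total lp lq with h | h
        · rw [min_eq_left h, max_eq_right h, ← hlp, ← hlq]
        · rw [min_eq_right h, max_eq_left h, ← hlp, ← hlq, Set.pair_comm] } with hTdef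
  have hside₁ : T.side₁ = γ.toFun '' Icc p q := rfl
  have hsimple : T.Simple := by
    apply Set.Subset.antisymm
    · rintro pt ⟨⟨x, hx, rfl⟩, ⟨y, hy, hye⟩⟩
      have hxI : x ∈ Icc (0:ℝ) 1 := ⟨hpI.1.trans hx.1, hx.2.trans hqI.2⟩
      have hyI : y ∈ Icc (0:ℝ) 1 := ⟨hminI.1.trans hy.1, hy.2.trans hmaxI.2⟩
      have hxK : x ∈ K := ⟨hxI, ⟨y, hyI, hye⟩⟩
      have : x = p ∨ x = q := by
        rcases eq_or_lt_of_le hx.1 with h | h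
        · exact Or.inl h.symm
        rcases eq_or_lt_of_le hx.2 with h2 | h2
        · exact Or.inr h2
        · exact absurd ⟨h, h2⟩ (hgapempty x hxK)
      rcases this with h | h
      · exact Or.inl (by rw [h])
      · exact Or.inr (by rw [h]; rfl)
    · rintro pt (h | h)
      · refine ⟨⟨p, ⟨le_rfl, hpq.le⟩, h.symm⟩, ⟨lp, ⟨min_le_left _ _, le_max_left _ _⟩, ?_⟩⟩
        rw [hlp, h]
      · simp only [Set.mem_singleton_iff] at h
        refine ⟨⟨q, ⟨hpq.le, le_rfl⟩, h.symm⟩, ⟨lq, ⟨min_le_right _ _, le_max_right _ _⟩, ?_⟩⟩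
        rw [hlq, h]
  have hnt : T.Nontrivial := by
    rintro ⟨c, hc⟩
    have h1' : γ.toFun p ∈ T.carrier := Or.inl ⟨p, ⟨le_rfl, hpq.le⟩, rfl⟩
    have h2' : γ.toFun q ∈ T.carrier := Or.inl ⟨q, ⟨hpq.le, le_rfl⟩, rfl⟩
    rw [hc] at h1' h2'
    exact hγpq (h1'.trans h2'.symm)
  obtain ⟨B, hB, hsub⟩ := h3 T hsimple hnt
  exact ⟨p, q, hpI.1, hps, hsq, hqI.2, B, hB, fun x hx => hsub (Or.inl hx)⟩

end Braid

open Braid Set Filter Topology in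
/-- **Proposition.** Let `𝓑` be a collection of closed subsets of `Y` with property
(T₁). Let `L₁`, `g₁` be arcs from `u` to `v` and `L₂`, `g₂` arcs from `v` to `w` with
`L₁ ∩ L₂ = {v}`, and let `a ≠ v` be a common point of `g₁` and `g₂`.  If every
non-trivial simple `𝒯`-bigon formed by `g₁` and `g₂`, by `g₁` and `L₁`, or by `g₂` and
`L₂` is contained in a member of `𝓑`, then the `𝒯`-bigon formed by `g₁` and `g₂`
with endpoints `a` and `v` is contained in a member of `𝓑`. -/
theorem braid_bigon {Y : Type*} [MetricSpace Y] (𝓑 : Set (Set Y))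
    (hclosed : ∀ B ∈ 𝓑, IsClosed B) (hT1 : PropT1 𝓑)
    (u v w : Y) (L₁ g₁ L₂ g₂ : TopArc Y)
    (hL₁0 : L₁.toFun 0 = u) (hL₁1 : L₁.toFun 1 = v)
    (hg₁0 : g₁.toFun 0 = u) (hg₁1 : g₁.toFun 1 = v)
    (hL₂0 : L₂.toFun 0 = v) (hL₂1 : L₂.toFun 1 = w)
    (hg₂0 : g₂.toFun 0 = v) (hg₂1 : g₂.toFun 1 = w)
    (h1 : L₁.image ∩ L₂.image = {v})
    (a : Y) (ha : a ∈ g₁.image ∩ g₂.image) (hav : a ≠ v)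
    (h3a : ∀ T : TBigon g₁ g₂, T.Simple → T.Nontrivial → ∃ B ∈ 𝓑, T.carrier ⊆ B)
    (h3b : ∀ T : TBigon g₁ L₁, T.Simple → T.Nontrivial → ∃ B ∈ 𝓑, T.carrier ⊆ B)
    (h3c : ∀ T : TBigon g₂ L₂, T.Simple → T.Nontrivial → ∃ B ∈ 𝓑, T.carrier ⊆ B) :
    ∀ T : TBigon g₁ g₂, T.endpoints = {a, v} → ∃ B ∈ 𝓑, T.carrier ⊆ B := by
  intro T hT
  have hI01 : (0:ℝ) ∈ Icc (0:ℝ) 1 := ⟨le_rfl, zero_le_one⟩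
  have hI11 : (1:ℝ) ∈ Icc (0:ℝ) 1 := ⟨zero_le_one, le_rfl⟩
  have hpair : ({g₁.toFun T.a₁, g₁.toFun T.b₁} : Set Y) = {a, v} := hT
  have hcase1 : g₁.toFun T.a₁ = a ∧ g₁.toFun T.b₁ = v := by
    rcases Set.pair_eq_pair_iff.mp hpair with ⟨h1', h2'⟩ | ⟨h1', h2'⟩
    · exact ⟨h1', h2'⟩
    · exfalso
      have hb1 : T.a₁ = 1 := g₁.inj T.ha₁ hI11 (by rw [h1', ← hg₁1])
      have hb1' : T.b₁ = 1 := le_antisymm T.hb₁.2 (hb1 ▸ T.hle₁)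
      exact hav (by rw [← h2', hb1', hg₁1])
  obtain ⟨ha₁, hb₁v⟩ := hcase1
  have hb₁ : T.b₁ = 1 := g₁.inj T.hb₁ hI11 (by rw [hb₁v, ← hg₁1])
  have hσ₁lt : T.a₁ < 1 := lt_of_le_of_ne T.ha₁.2 (fun h => hav (by rw [← ha₁, h, hg₁1]))
  have hpair2 : ({g₂.toFun T.a₂, g₂.toFun T.b₂} : Set Y) = {a, v} := T.ends_eq.symm.trans hT
  have hcase2 : g₂.toFun T.a₂ = v ∧ g₂.toFun T.b₂ = a := by
    rcases Set.pair_eq_pair_iff.mp hpair2 with ⟨h1', h2'⟩ | ⟨h1', h2'⟩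
    · exfalso
      have hb2 : T.b₂ = 0 := g₂.inj T.hb₂ hI01 (by rw [h2', ← hg₂0])
      have ha2' : T.a₂ = 0 := le_antisymm (hb2 ▸ T.hle₂) T.ha₂.1
      exact hav (by rw [← h1', ha2', hg₂0])
    · exact ⟨h1', h2'⟩
  obtain ⟨ha₂v, hb₂a⟩ := hcase2
  have ha₂ : T.a₂ = 0 := g₂.inj T.ha₂ hI01 (by rw [ha₂v, ← hg₂0])
  have hσ₂pos : 0 < T.b₂ := lt_of_le_of_ne T.hb₂.1
    (fun h => hav (by rw [← hb₂a, ← h, hg₂0]))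
  set σ₁ := T.a₁ with hσ₁def
  set σ₂ := T.b₂ with hσ₂def
  have hσ₁I : σ₁ ∈ Icc (0:ℝ) 1 := T.ha₁
  have hσ₂I : σ₂ ∈ Icc (0:ℝ) 1 := T.hb₂
  set k₁ := 1 - σ₁ with hk₁def
  have hk₁pos : 0 < k₁ := by rw [hk₁def]; linarith
  set α := fun r : ℝ => g₁.toFun (σ₁ + r * k₁) with hαdef
  set β := fun r : ℝ => g₂.toFun (σ₂ - r * σ₂) with hβdef
  have hA1 : ∀ r ∈ Icc (0:ℝ) 1, σ₁ + r * k₁ ∈ Icc (0:ℝ) 1 := by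
    intro r hr
    constructor <;> nlinarith [hσ₁I.1, hσ₁I.2, hr.1, hr.2, hk₁pos]
  have hA2 : ∀ r ∈ Icc (0:ℝ) 1, σ₂ - r * σ₂ ∈ Icc (0:ℝ) 1 := by
    intro r hr
    constructor <;> nlinarith [hσ₂I.1, hσ₂I.2, hr.1, hr.2]
  have hA1inj : ∀ x y : ℝ, σ₁ + x * k₁ = σ₁ + y * k₁ → x = y := by
    intro x y h
    have h' : x * k₁ = y * k₁ := by linarith
    exact mul_right_cancel₀ (ne_of_gt hk₁pos) h'
  have hA2inj : ∀ x y : ℝ, σ₂ - x * σ₂ = σ₂ - y * σ₂ → x = y := by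
    intro x y h
    have h' : x * σ₂ = y * σ₂ := by linarith
    exact mul_right_cancel₀ (ne_of_gt hσ₂pos) h'
  have hA1cont : Continuous fun r : ℝ => σ₁ + r * k₁ :=
    continuous_const.add (continuous_id.mul continuous_const)
  have hA2cont : Continuous fun r : ℝ => σ₂ - r * σ₂ :=
    continuous_const.sub (continuous_id.mul continuous_const)
  have hαc : ContinuousOn α (Icc 0 1) :=
    g₁.cont.comp hA1cont.continuousOn (fun r hr => hA1 r hr)
  have hβc : ContinuousOn β (Icc 0 1) :=
    g₂.cont.comp hA2cont.continuousOn (fun r hr => hA2 r hr)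
  have hαi : InjOn α (Icc 0 1) :=
    fun x hx y hy h => hA1inj x y (g₁.inj (hA1 x hx) (hA1 y hy) h)
  have hβi : InjOn β (Icc 0 1) :=
    fun x hx y hy h => hA2inj x y (g₂.inj (hA2 x hx) (hA2 y hy) h)
  have hα0 : α 0 = a := by
    show g₁.toFun (σ₁ + 0 * k₁) = a
    rw [show σ₁ + 0 * k₁ = σ₁ by ring]
    exact ha₁
  have hα1 : α 1 = v := by
    show g₁.toFun (σ₁ + 1 * k₁) = v
    rw [show σ₁ + 1 * k₁ = 1 by rw [hk₁def]; ring]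
    exact hg₁1
  have hβ0 : β 0 = a := by
    show g₂.toFun (σ₂ - 0 * σ₂) = a
    rw [show σ₂ - 0 * σ₂ = σ₂ by ring]
    exact hb₂a
  have hβ1 : β 1 = v := by
    show g₂.toFun (σ₂ - 1 * σ₂) = v
    rw [show σ₂ - 1 * σ₂ = 0 by ring]
    exact hg₂0
  have h00 : α 0 = β 0 := by rw [hα0, hβ0]
  have h11 : α 1 = β 1 := by rw [hα1, hβ1]
  have hne01 : α 0 ≠ α 1 := by rw [hα0, hα1]; exact hav
  -- the bigon hypothesis, transported
  have hgap : ∀ c d τ₁ τ₂ : ℝ, c ∈ Icc (0:ℝ) 1 → d ∈ Icc (0:ℝ) 1 → τ₁ ∈ Icc (0:ℝ) 1 →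
      τ₂ ∈ Icc (0:ℝ) 1 → c ≤ d → τ₁ ≤ τ₂ → (c < d ∨ τ₁ < τ₂) →
      ({α c, α d} : Set Y) = {β τ₁, β τ₂} →
      (α '' Icc c d ∩ β '' Icc τ₁ τ₂ ⊆ {α c, α d}) →
      ∃ B ∈ 𝓑, α '' Icc c d ∪ β '' Icc τ₁ τ₂ ⊆ B := by
    intro c d τ₁ τ₂ hc hd h1' h2' hcd hτ hlt hends hinter
    have hle₁' : σ₁ + c * k₁ ≤ σ₁ + d * k₁ := by nlinarith [hk₁pos]
    have hle₂' : σ₂ - τ₂ * σ₂ ≤ σ₂ - τ₁ * σ₂ := by nlinarith [hσ₂pos]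
    set T' : TBigon g₁ g₂ :=
      { a₁ := σ₁ + c * k₁, b₁ := σ₁ + d * k₁, a₂ := σ₂ - τ₂ * σ₂, b₂ := σ₂ - τ₁ * σ₂
        ha₁ := hA1 c hc, hb₁ := hA1 d hd, ha₂ := hA2 τ₂ h2', hb₂ := hA2 τ₁ h1'
        hle₁ := hle₁', hle₂ := hle₂'
        ends_eq := hends.trans (Set.pair_comm _ _) } with hT'def
    have hside1 : T'.side₁ = α '' Icc c d := by
      show g₁.toFun '' Icc (σ₁ + c * k₁) (σ₁ + d * k₁) = α '' Icc c d
      rw [hαdef, arc_image g₁.toFun σ₁ k₁ c d hk₁pos]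
    have hside2 : T'.side₂ = β '' Icc τ₁ τ₂ := by
      show g₂.toFun '' Icc (σ₂ - τ₂ * σ₂) (σ₂ - τ₁ * σ₂) = β '' Icc τ₁ τ₂
      rw [hβdef, arc_image_dec g₂.toFun σ₂ σ₂ τ₁ τ₂ hσ₂pos]
    have hmem2 : ∀ x ∈ ({α c, α d} : Set Y), x ∈ β '' Icc τ₁ τ₂ := by
      intro x hx
      rw [hends] at hx
      rcases hx with h | h
      · exact ⟨τ₁, ⟨le_rfl, hτ⟩, h.symm⟩
      · exact ⟨τ₂, ⟨hτ, le_rfl⟩, (Set.mem_singleton_iff.mp h).symm⟩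
    have hsimple : T'.Simple := by
      show T'.side₁ ∩ T'.side₂ = ({g₁.toFun T'.a₁, g₁.toFun T'.b₁} : Set Y)
      rw [hside1, hside2]
      apply Set.Subset.antisymm
      · exact hinter
      · rintro pt (h | h)
        · exact ⟨⟨c, ⟨le_rfl, hcd⟩, h.symm⟩, hmem2 pt (Or.inl h)⟩
        · refine ⟨⟨d, ⟨hcd, le_rfl⟩, (Set.mem_singleton_iff.mp h).symm⟩, hmem2 pt (Or.inr h)⟩
    have hnt : T'.Nontrivial := by
      rintro ⟨x0, hx0⟩
      rcases hlt with h | h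
      · have h1'' : α c ∈ T'.carrier := Or.inl (hside1 ▸ ⟨c, ⟨le_rfl, hcd⟩, rfl⟩)
        have h2'' : α d ∈ T'.carrier := Or.inl (hside1 ▸ ⟨d, ⟨hcd, le_rfl⟩, rfl⟩)
        rw [hx0] at h1'' h2''
        have : α c = α d := h1''.trans h2''.symm
        exact absurd (hαi ⟨hc.1, hc.2⟩ ⟨hd.1, hd.2⟩ this) (ne_of_lt h)
      · have h1'' : β τ₁ ∈ T'.carrier := Or.inr (hside2 ▸ ⟨τ₁, ⟨le_rfl, hτ⟩, rfl⟩)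
        have h2'' : β τ₂ ∈ T'.carrier := Or.inr (hside2 ▸ ⟨τ₂, ⟨hτ, le_rfl⟩, rfl⟩)
        rw [hx0] at h1'' h2''
        have : β τ₁ = β τ₂ := h1''.trans h2''.symm
        exact absurd (hβi ⟨h1'.1, h1'.2⟩ ⟨h2'.1, h2'.2⟩ this) (ne_of_lt h)
    obtain ⟨B, hB, hsub⟩ := h3a T' hsimple hnt
    refine ⟨B, hB, ?_⟩
    rintro x (h | h)
    · exact hsub (Or.inl (hside1 ▸ h))
    · exact hsub (Or.inr (hside2 ▸ h))
  -- the absorption hypothesis, transported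
  have habs : ∀ r τ : ℝ, r ∈ Ico (0:ℝ) 1 → τ ∈ Ico (0:ℝ) 1 → α r = β τ →
      (∃ p q : ℝ, 0 ≤ p ∧ p ≤ r ∧ (0 < r → p < r) ∧ r < q ∧ q ≤ 1 ∧
        ∃ B ∈ 𝓑, α '' Icc p q ⊆ B) ∨
      (∃ p q : ℝ, 0 ≤ p ∧ p ≤ τ ∧ (0 < τ → p < τ) ∧ τ < q ∧ q ≤ 1 ∧
        ∃ B ∈ 𝓑, β '' Icc p q ⊆ B) := by
    intro r τ hr hτ hrτ
    have hArI : σ₁ + r * k₁ ∈ Icc (0:ℝ) 1 := hA1 r ⟨hr.1, hr.2.le⟩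
    have hAr1 : σ₁ + r * k₁ < 1 := by nlinarith [hr.2, hk₁pos]
    have hBτI : σ₂ - τ * σ₂ ∈ Icc (0:ℝ) 1 := hA2 τ ⟨hτ.1, hτ.2.le⟩
    have hBτpos : 0 < σ₂ - τ * σ₂ := by nlinarith [hτ.2, hσ₂pos]
    have hzv : α r ≠ v := by
      intro h
      have heq : σ₁ + r * k₁ = 1 := g₁.inj hArI hI11 (by rw [← hg₁1] at h; exact h)
      linarith
    have hznotboth : α r ∉ L₁.image ∨ α r ∉ L₂.image := by
      by_contra hcon
      push_neg at hcon
      have hmem : α r ∈ L₁.image ∩ L₂.image := ⟨hcon.1, hcon.2⟩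
      rw [h1] at hmem
      exact hzv hmem
    rcases hznotboth with hzL | hzL
    · left
      have h0L : g₁.toFun 0 ∈ L₁.image := ⟨0, hI01, by rw [hL₁0, hg₁0]⟩
      have h1L : g₁.toFun 1 ∈ L₁.image := ⟨1, hI11, by rw [hL₁1, hg₁1]⟩
      obtain ⟨ph, qh, hph0, hph, hqh, hqh1, B, hB, hsub⟩ :=
        exists_absorb h3b h0L h1L hArI hzL
      refine ⟨max ((ph - σ₁)/k₁) 0, min ((qh - σ₁)/k₁) 1, le_max_right _ _, ?_, ?_, ?_,
        min_le_right _ _, B, hB, ?_⟩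
      · refine max_le ?_ hr.1
        rw [div_le_iff₀ hk₁pos]; linarith
      · intro hr0
        refine max_lt ?_ hr0
        rw [div_lt_iff₀ hk₁pos]; linarith
      · refine lt_min ?_ hr.2
        rw [lt_div_iff₀ hk₁pos]; linarith
      · have himg : α '' Icc (max ((ph - σ₁)/k₁) 0) (min ((qh - σ₁)/k₁) 1) =
            g₁.toFun '' Icc (σ₁ + (max ((ph - σ₁)/k₁) 0) * k₁)
              (σ₁ + (min ((qh - σ₁)/k₁) 1) * k₁) := by
          rw [hαdef, arc_image g₁.toFun σ₁ k₁ _ _ hk₁pos]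
        rw [himg]
        refine (Set.image_mono (f := g₁.toFun) (Set.Icc_subset_Icc ?_ ?_)).trans hsub
        · have : (ph - σ₁)/k₁ ≤ max ((ph - σ₁)/k₁) 0 := le_max_left _ _
          have h2' : (ph - σ₁)/k₁ * k₁ = ph - σ₁ := div_mul_cancel₀ _ (ne_of_gt hk₁pos)
          nlinarith [hk₁pos]
        · have : min ((qh - σ₁)/k₁) 1 ≤ (qh - σ₁)/k₁ := min_le_left _ _
          have h2' : (qh - σ₁)/k₁ * k₁ = qh - σ₁ := div_mul_cancel₀ _ (ne_of_gt hk₁pos)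
          nlinarith [hk₁pos]
    · right
      have h0L : g₂.toFun 0 ∈ L₂.image := ⟨0, hI01, by rw [hL₂0, hg₂0]⟩
      have h1L : g₂.toFun 1 ∈ L₂.image := ⟨1, hI11, by rw [hL₂1, hg₂1]⟩
      have hzL₂ : g₂.toFun (σ₂ - τ * σ₂) ∉ L₂.image := by
        intro hmem
        apply hzL
        rw [hrτ]
        exact hmem
      obtain ⟨ph, qh, hph0, hph, hqh, hqh1, B, hB, hsub⟩ :=
        exists_absorb h3c h0L h1L hBτI hzL₂
      refine ⟨max ((σ₂ - qh)/σ₂) 0, min ((σ₂ - ph)/σ₂) 1, le_max_right _ _, ?_, ?_, ?_,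
        min_le_right _ _, B, hB, ?_⟩
      · refine max_le ?_ hτ.1
        rw [div_le_iff₀ hσ₂pos]; linarith
      · intro hτ0
        refine max_lt ?_ hτ0
        rw [div_lt_iff₀ hσ₂pos]; linarith
      · refine lt_min ?_ hτ.2
        rw [lt_div_iff₀ hσ₂pos]; linarith
      · have himg : β '' Icc (max ((σ₂ - qh)/σ₂) 0) (min ((σ₂ - ph)/σ₂) 1) =
            g₂.toFun '' Icc (σ₂ - (min ((σ₂ - ph)/σ₂) 1) * σ₂)
              (σ₂ - (max ((σ₂ - qh)/σ₂) 0) * σ₂) := by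
          rw [hβdef, arc_image_dec g₂.toFun σ₂ σ₂ _ _ hσ₂pos]
        rw [himg]
        refine (Set.image_mono (f := g₂.toFun) (Set.Icc_subset_Icc ?_ ?_)).trans hsub
        · have : min ((σ₂ - ph)/σ₂) 1 ≤ (σ₂ - ph)/σ₂ := min_le_left _ _
          have h2' : (σ₂ - ph)/σ₂ * σ₂ = σ₂ - ph := div_mul_cancel₀ _ (ne_of_gt hσ₂pos)
          nlinarith [hσ₂pos]
        · have : (σ₂ - qh)/σ₂ ≤ max ((σ₂ - qh)/σ₂) 0 := le_max_left _ _
          have h2' : (σ₂ - qh)/σ₂ * σ₂ = σ₂ - qh := div_mul_cancel₀ _ (ne_of_gt hσ₂pos)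
          nlinarith [hσ₂pos]
  -- build the context and conclude
  set C : Braid.Ctx Y :=
    { B𝒻 := 𝓑, hclosed := hclosed, hT1 := hT1, α := α, β := β,
      αc := hαc, αi := hαi, βc := hβc, βi := hβi,
      h00 := h00, h11 := h11, hne01 := hne01, hgap := hgap, habs := habs } with hCdef
  obtain ⟨B, hB, hsub⟩ := C.core
  refine ⟨B, hB, ?_⟩
  have himg1 : α '' Icc 0 1 = g₁.toFun '' Icc σ₁ 1 := by
    rw [hαdef, arc_image g₁.toFun σ₁ k₁ 0 1 hk₁pos,
      show σ₁ + 0 * k₁ = σ₁ by ring, show σ₁ + 1 * k₁ = 1 by rw [hk₁def]; ring]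
  have himg2 : β '' Icc 0 1 = g₂.toFun '' Icc 0 σ₂ := by
    rw [hβdef, arc_image_dec g₂.toFun σ₂ σ₂ 0 1 hσ₂pos,
      show σ₂ - 1 * σ₂ = 0 by ring, show σ₂ - 0 * σ₂ = σ₂ by ring]
  rintro pt (h | h)
  · apply hsub
    left
    rw [himg1]
    have h' : pt ∈ g₁.toFun '' Icc T.a₁ T.b₁ := h
    rw [hb₁] at h'
    exact h'
  · apply hsub
    right
    rw [himg2]
    have h' : pt ∈ g₂.toFun '' Icc T.a₂ T.b₂ := h
    rw [ha₂] at h'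
    exact h'
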